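/- arXiv:2602.05272 — 4 statements merged into one kernel-verified Lean document; each statement's English description precedes it below -/
import Mathlib

section
/- Conditional change of measure at a stopping time (Lemma 2.4, third claim): Let P, Q be probability measures on 𝒳 with Q ≪ P, let k ≥ 1, and let T be a stopping time with respect to (F_n) such that P^∞(T ≥ k) > 0. Then for every A ∈ F_T with A ⊆ {T < ∞}, one has ℙ^{(P)}_{k,Q}(A | T ≥ k) = E_{P^∞}[ e^{L_{k,T}} 1_A | T ≥ k ], where on the event {T = n} the random variable L_{k,T} equals L_{k:n}. -/
open MeasureTheory Filter Set
open scoped ENNReal NNReal Classical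

noncomputable section

variable {𝒳 : Type*} [MeasurableSpace 𝒳]

/-- The natural filtration `F n = σ(X_1, …, X_n)` on `Ω = 𝒳^ℕ`, where `X_i ω = ω (i-1)`. -/
def natF (𝒳 : Type*) [MeasurableSpace 𝒳] (n : ℕ) : MeasurableSpace (ℕ → 𝒳) :=
  MeasurableSpace.comap (fun ω (i : Fin n) => ω (i : ℕ)) inferInstance

/-- `T` is a stopping time with respect to the natural filtration `(F_n)`. -/
def IsStopping (𝒳 : Type*) [MeasurableSpace 𝒳] (T : (ℕ → 𝒳) → ℕ∞) : Prop :=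
  ∀ n : ℕ, MeasurableSet[natF 𝒳 n] {ω | T ω ≤ (n : ℕ∞)}

/-- `μ` is the i.i.d. infinite product `P^∞`: every finite-dimensional marginal is the
corresponding product of copies of `P`. -/
def IsIID (P : Measure 𝒳) (μ : Measure (ℕ → 𝒳)) : Prop :=
  IsProbabilityMeasure μ ∧
    ∀ n : ℕ, Measure.map (fun ω (i : Fin n) => ω (i : ℕ)) μ = Measure.pi fun _ : Fin n => P

/-- `μ` is the changepoint law `ℙ^{(P)}_{k,Q}`: `X_1,…,X_{k-1}` are i.i.d. `P` and
`X_k, X_{k+1}, …` are i.i.d. `Q`. -/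
def IsChange (P Q : Measure 𝒳) (k : ℕ) (μ : Measure (ℕ → 𝒳)) : Prop :=
  IsProbabilityMeasure μ ∧
    ∀ n : ℕ, Measure.map (fun ω (i : Fin n) => ω (i : ℕ)) μ
      = Measure.pi fun i : Fin n => if (i : ℕ) + 1 < k then P else Q

/-- Kullback–Leibler divergence `KL(Q‖P)`, valued in `ℝ≥0∞` (equal to `⊤` unless `Q ≪ P`
and the log-likelihood ratio is `Q`-integrable). -/
def KL (Q P : Measure 𝒳) : ℝ≥0∞ :=
  if Q ≪ P ∧ Integrable (llr Q P) Q then ENNReal.ofReal (∫ x, llr Q P x ∂Q) else ⊤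

/-- `I(Q;Pcl) = inf_{P ∈ Pcl} KL(Q‖P)`. -/
def KLinf (Q : Measure 𝒳) (Pcl : Set (Measure 𝒳)) : ℝ≥0∞ := ⨅ P ∈ Pcl, KL Q P

/-- `E_μ[(T - k + 1)^+ ∣ T ≥ k]`. -/
def condDelay (μ : Measure (ℕ → 𝒳)) (T : (ℕ → 𝒳) → ℕ∞) (k : ℕ) : ℝ≥0∞ :=
  (∫⁻ ω in {ω | (k : ℕ∞) ≤ T ω}, ((T ω + 1 - (k : ℕ∞) : ℕ∞) : ℝ≥0∞) ∂μ)
    / μ {ω | (k : ℕ∞) ≤ T ω}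

/-- Pollak's conditional average detection delay
`C_Q(T) = sup_{P∈Pcl} sup_{k ≥ 1, ℙ^{(P)}_{k,Q}(T ≥ k) > 0} E^{(P)}_{k,Q}[(T-k+1)^+ ∣ T ≥ k]`. -/
def CADD (Pcl : Set (Measure 𝒳)) (Q : Measure 𝒳) (T : (ℕ → 𝒳) → ℕ∞) : ℝ≥0∞ :=
  ⨆ P ∈ Pcl, ⨆ k : ℕ, ⨆ _ : 1 ≤ k, ⨆ μ : Measure (ℕ → 𝒳),
    ⨆ _ : IsChange P Q k μ ∧ 0 < μ {ω | (k : ℕ∞) ≤ T ω}, condDelay μ T k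

lemma lintegral_pi_prod {n : ℕ} (μ : Fin n → Measure 𝒳) [∀ i, SigmaFinite (μ i)]
    (g : Fin n → 𝒳 → ℝ≥0∞) (hg : ∀ i, Measurable (g i)) :
    ∫⁻ x, ∏ i, g i (x i) ∂Measure.pi μ = ∏ i, ∫⁻ y, g i y ∂μ i := by
  induction n with
  | zero => simp [Measure.pi_of_empty]
  | succ n ih =>
      have hmp := measurePreserving_piFinSuccAbove μ 0
      set e := MeasurableEquiv.piFinSuccAbove (fun _ : Fin (n+1) => 𝒳) 0 with he
      have hG : Measurable fun p : 𝒳 × (Fin n → 𝒳) =>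
          g 0 p.1 * ∏ j : Fin n, g ((0 : Fin (n+1)).succAbove j) (p.2 j) := by
        apply Measurable.mul (by exact (hg 0).comp measurable_fst)
        exact Finset.measurable_prod _ fun j _ =>
          (hg _).comp ((measurable_pi_apply j).comp measurable_snd)
      calc ∫⁻ x, ∏ i, g i (x i) ∂Measure.pi μ
          = ∫⁻ x, (fun p : 𝒳 × (Fin n → 𝒳) =>
              g 0 p.1 * ∏ j : Fin n, g ((0 : Fin (n+1)).succAbove j) (p.2 j)) (e x)
              ∂Measure.pi μ := by
            refine lintegral_congr fun x => ?_
            simp [e, MeasurableEquiv.piFinSuccAbove_apply, Fin.prod_univ_succ,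
              Fin.succAbove_zero, Fin.tail]
        _ = ∫⁻ p, g 0 p.1 * ∏ j : Fin n, g ((0 : Fin (n+1)).succAbove j) (p.2 j)
              ∂((μ 0).prod (Measure.pi fun j => μ ((0 : Fin (n+1)).succAbove j))) :=
            hmp.lintegral_comp hG
        _ = (∫⁻ y, g 0 y ∂μ 0) *
              ∫⁻ y, ∏ j : Fin n, g ((0 : Fin (n+1)).succAbove j) (y j)
                ∂(Measure.pi fun j => μ ((0 : Fin (n+1)).succAbove j)) :=
            lintegral_prod_mul ((hg 0).aemeasurable)
              ((Finset.measurable_prod _ fun j _ => (hg _).comp (measurable_pi_apply j)).aemeasurable)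
        _ = (∫⁻ y, g 0 y ∂μ 0) *
              ∏ j : Fin n, ∫⁻ y, g ((0 : Fin (n+1)).succAbove j) y ∂μ ((0 : Fin (n+1)).succAbove j) := by
            rw [ih (fun j => μ ((0 : Fin (n+1)).succAbove j)) _ (fun j => hg _)]
        _ = ∏ i, ∫⁻ y, g i y ∂μ i := by
            rw [Fin.prod_univ_succ]
            simp [Fin.succAbove_zero]

lemma pi_cond_eq_withDensity (P Q : Measure 𝒳) [IsProbabilityMeasure P] [IsProbabilityMeasure Q]
    (hQP : Q ≪ P) (k n : ℕ) :
    (Measure.pi fun i : Fin n => if (i : ℕ) + 1 < k then P else Q)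
      = (Measure.pi fun _ : Fin n => P).withDensity
          (fun x => ∏ i : Fin n, if (i : ℕ) + 1 < k then 1 else Q.rnDeriv P (x i)) := by
  haveI : ∀ i : Fin n, SigmaFinite (if (i : ℕ) + 1 < k then P else Q) := fun i => by
    split <;> infer_instance
  refine Measure.pi_eq fun s hs => ?_
  rw [withDensity_apply _ (MeasurableSet.pi countable_univ fun i _ => hs i)]
  have : ∫⁻ x in Set.pi univ s,
      (∏ i : Fin n, if (i : ℕ) + 1 < k then 1 else Q.rnDeriv P (x i))
        ∂(Measure.pi fun _ : Fin n => P)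
      = ∫⁻ x, ∏ i : Fin n,
          (s i).indicator (fun y => if (i : ℕ) + 1 < k then 1 else Q.rnDeriv P y) (x i)
        ∂(Measure.pi fun _ : Fin n => P) := by
    rw [← lintegral_indicator (MeasurableSet.pi countable_univ fun i _ => hs i)]
    refine lintegral_congr fun x => ?_
    by_cases hx : x ∈ Set.pi univ s
    · rw [indicator_of_mem hx]
      exact Finset.prod_congr rfl fun i _ => (indicator_of_mem (hx i (mem_univ i)) (fun y => if (i:ℕ)+1 < k then 1 else Q.rnDeriv P y)).symm
    · rw [indicator_of_notMem hx]
      rw [Set.mem_pi] at hx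
      push_neg at hx
      obtain ⟨i, -, hi⟩ := hx
      exact (Finset.prod_eq_zero (Finset.mem_univ i) (indicator_of_notMem hi _)).symm
  rw [this, lintegral_pi_prod _ _ (fun i => Measurable.indicator
      (by split; exact measurable_const; exact Q.measurable_rnDeriv P) (hs i))]
  refine Finset.prod_congr rfl fun i _ => ?_
  rw [lintegral_indicator (hs i)]
  split_ifs with h
  · simp
  · exact Measure.setLIntegral_rnDeriv hQP (s i)

lemma natF_le (𝒳 : Type*) [MeasurableSpace 𝒳] (n : ℕ) :
    natF 𝒳 n ≤ (inferInstance : MeasurableSpace (ℕ → 𝒳)) := by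
  intro s hs
  obtain ⟨s', hs', rfl⟩ := hs
  exact (measurable_pi_lambda _ fun i : Fin n => measurable_pi_apply (i : ℕ)) hs'


/-- **Lemma 2.4, third claim (conditional change of measure at a stopping time).** For
`A ∈ F_T` with `A ⊆ {T < ∞}` and `P^∞(T ≥ k) > 0`,
`ℙ^{(P)}_{k,Q}(A ∣ T ≥ k) = E_{P^∞}[e^{L_{k,T}} 1_A ∣ T ≥ k]`, where on `{T = n}` we have
`e^{L_{k,T}} = ∏_{i=k}^{n} (dQ/dP)(X_i)` and `X_i ω = ω (i-1)`. -/
theorem conditional_change_of_measure_at_stopping_time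
    (P Q : Measure 𝒳) (hP : IsProbabilityMeasure P) (hQ : IsProbabilityMeasure Q)
    (hQP : Q ≪ P) (k : ℕ) (hk : 1 ≤ k)
    (μk : Measure (ℕ → 𝒳)) (hμk : IsChange P Q k μk)
    (μinf : Measure (ℕ → 𝒳)) (hμinf : IsIID P μinf)
    (T : (ℕ → 𝒳) → ℕ∞) (hT : IsStopping 𝒳 T)
    (hpos : 0 < μinf {ω | (k : ℕ∞) ≤ T ω})
    (A : Set (ℕ → 𝒳))
    (hAstopped : ∀ n : ℕ, MeasurableSet[natF 𝒳 n] (A ∩ {ω | T ω = (n : ℕ∞)}))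
    (hAfin : A ⊆ {ω | T ω < ⊤}) :
    μk (A ∩ {ω | (k : ℕ∞) ≤ T ω}) / μk {ω | (k : ℕ∞) ≤ T ω} =
      (∫⁻ ω in A ∩ {ω | (k : ℕ∞) ≤ T ω},
          ∏ i ∈ Finset.Icc k (T ω).toNat, Q.rnDeriv P (ω (i - 1)) ∂μinf)
        / μinf {ω | (k : ℕ∞) ≤ T ω} := by
  classical
  obtain ⟨hμkP, hμkmap⟩ := hμk
  obtain ⟨hμinfP, hμinfmap⟩ := hμinf
  haveI := hP; haveI := hQ; haveI := hμkP; haveI := hμinfP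
  set f := Q.rnDeriv P with hfdef
  have hπ : ∀ n : ℕ, Measurable fun ω : ℕ → 𝒳 => fun i : Fin n => ω (i : ℕ) :=
    fun n => measurable_pi_lambda _ fun i => measurable_pi_apply _
  -- the key change-of-measure identity on `F n`
  have key : ∀ (n : ℕ) (B : Set (ℕ → 𝒳)), MeasurableSet[natF 𝒳 n] B →
      μk B = ∫⁻ ω in B, ∏ i ∈ Finset.Icc k n, f (ω (i - 1)) ∂μinf := by
    intro n B hB
    obtain ⟨B', hB'm, rfl⟩ := hB
    have hG : Measurable fun x : Fin n → 𝒳 =>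
        ∏ i : Fin n, if (i : ℕ) + 1 < k then (1 : ℝ≥0∞) else f (x i) :=
      Finset.measurable_prod _ fun i _ => by
        split
        · exact measurable_const
        · exact (Q.measurable_rnDeriv P).comp (measurable_pi_apply i)
    have hprod : ∀ ω : ℕ → 𝒳,
        (∏ i : Fin n, if (i : ℕ) + 1 < k then (1 : ℝ≥0∞) else f (ω (i : ℕ)))
          = ∏ i ∈ Finset.Icc k n, f (ω (i - 1)) := by
      intro ω
      have h1 : (∏ i : Fin n, if (i : ℕ) + 1 < k then (1 : ℝ≥0∞) else f (ω (i : ℕ)))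
          = ∏ j ∈ Finset.Ico (k - 1) n, f (ω j) := by
        rw [Fin.prod_univ_eq_prod_range (fun j => if j + 1 < k then (1 : ℝ≥0∞) else f (ω j)) n]
        rw [show Finset.Ico (k - 1) n = (Finset.range n).filter (fun j => k - 1 ≤ j) by
          ext j; simp only [Finset.mem_filter, Finset.mem_range, Finset.mem_Ico]; omega]
        rw [Finset.prod_filter]
        refine Finset.prod_congr rfl fun j _ => ?_
        by_cases h : k - 1 ≤ j
        · rw [if_pos h, if_neg (by omega)]
        · rw [if_neg h, if_pos (by omega)]
      rw [h1]
      refine (Finset.prod_nbij' (fun i => i - 1) (fun j => j + 1) ?_ ?_ ?_ ?_ ?_).symm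
      · intro a ha; simp only [Finset.mem_Icc] at ha; simp only [Finset.mem_Ico]; omega
      · intro a ha; simp only [Finset.mem_Ico] at ha; simp only [Finset.mem_Icc]; omega
      · intro a ha; simp only [Finset.mem_Icc] at ha; show a - 1 + 1 = a; omega
      · intro a ha; simp only [Finset.mem_Ico] at ha; show a + 1 - 1 = a; omega
      · intro a ha; rfl
    have h1 : μk ((fun ω (i : Fin n) => ω (i : ℕ)) ⁻¹' B')
        = (Measure.pi fun i : Fin n => if (i : ℕ) + 1 < k then P else Q) B' := by
      rw [← hμkmap n, Measure.map_apply (hπ n) hB'm]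
    rw [h1, pi_cond_eq_withDensity P Q hQP k n, withDensity_apply _ hB'm, ← hμinfmap n,
      setLIntegral_map hB'm hG (hπ n)]
    refine lintegral_congr fun ω => hprod ω
  -- the slices
  set S : ℕ → Set (ℕ → 𝒳) :=
    fun n => A ∩ {ω | T ω = (n : ℕ∞)} ∩ {ω | (k : ℕ∞) ≤ T ω} with hSdef
  have hSF : ∀ n, MeasurableSet[natF 𝒳 n] (S n) := by
    intro n
    by_cases hkn : k ≤ n
    · have : S n = A ∩ {ω | T ω = (n : ℕ∞)} := by
        ext ω
        simp only [hSdef, mem_inter_iff, mem_setOf_eq, and_iff_left_iff_imp, and_imp]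
        intro _ hTn
        rw [hTn]
        exact_mod_cast hkn
      rw [this]; exact hAstopped n
    · have : S n = ∅ := by
        ext ω
        simp only [hSdef, mem_inter_iff, mem_setOf_eq, mem_empty_iff_false, iff_false, not_and,
          and_imp]
        intro _ hTn hkT
        rw [hTn] at hkT
        exact hkn (by exact_mod_cast hkT)
      rw [this]; exact @MeasurableSet.empty _ (natF 𝒳 n)
  have hSm : ∀ n, MeasurableSet (S n) := fun n => natF_le 𝒳 n _ (hSF n)
  have hSd : Pairwise (Function.onFun Disjoint S) := by
    intro n m hnm
    refine Set.disjoint_left.mpr fun ω hωn hωm => hnm ?_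
    have h1 : T ω = (n : ℕ∞) := hωn.1.2
    have h2 : T ω = (m : ℕ∞) := hωm.1.2
    exact_mod_cast h1 ▸ h2
  have hSU : ⋃ n, S n = A ∩ {ω | (k : ℕ∞) ≤ T ω} := by
    ext ω
    simp only [mem_iUnion, hSdef, mem_inter_iff, mem_setOf_eq]
    constructor
    · rintro ⟨n, ⟨hA, -⟩, hkT⟩; exact ⟨hA, hkT⟩
    · rintro ⟨hA, hkT⟩
      refine ⟨(T ω).toNat, ⟨hA, ?_⟩, hkT⟩
      exact (ENat.coe_toNat (by exact (hAfin hA).ne)).symm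
  -- numerator
  have hnum : μk (A ∩ {ω | (k : ℕ∞) ≤ T ω}) =
      ∫⁻ ω in A ∩ {ω | (k : ℕ∞) ≤ T ω},
        ∏ i ∈ Finset.Icc k (T ω).toNat, f (ω (i - 1)) ∂μinf := by
    rw [← hSU, measure_iUnion hSd hSm, lintegral_iUnion hSm hSd]
    refine tsum_congr fun n => ?_
    rw [key n (S n) (hSF n)]
    refine setLIntegral_congr_fun (hSm n) (fun ω hω => ?_)
    have hTn : T ω = (n : ℕ∞) := hω.1.2
    rw [hTn, ENat.toNat_coe]
  -- denominator
  have hcast : ((k - 1 : ℕ) : ℕ∞) + 1 = (k : ℕ∞) := by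
    have h : k - 1 + 1 = k := by omega
    exact_mod_cast congrArg (fun m : ℕ => (m : ℕ∞)) h
  have hset : {ω : ℕ → 𝒳 | (k : ℕ∞) ≤ T ω} = {ω | T ω ≤ ((k - 1 : ℕ) : ℕ∞)}ᶜ := by
    ext ω
    simp only [mem_setOf_eq, mem_compl_iff, not_le,
      ← ENat.add_one_le_iff (show ((k - 1 : ℕ) : ℕ∞) ≠ ⊤ from ENat.coe_ne_top _), hcast]
  have hden : μk {ω | (k : ℕ∞) ≤ T ω} = μinf {ω | (k : ℕ∞) ≤ T ω} := by
    obtain ⟨C, hCm, hC⟩ := hT (k - 1)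
    have hmaps : Measure.map (fun ω (i : Fin (k - 1)) => ω (i : ℕ)) μk
        = Measure.map (fun ω (i : Fin (k - 1)) => ω (i : ℕ)) μinf := by
      rw [hμkmap, hμinfmap]
      congr 1
      funext i
      rw [if_pos (by omega)]
    have heq : μk {ω | T ω ≤ ((k - 1 : ℕ) : ℕ∞)} = μinf {ω | T ω ≤ ((k - 1 : ℕ) : ℕ∞)} := by
      rw [← hC, ← Measure.map_apply (hπ (k - 1)) hCm, ← Measure.map_apply (hπ (k - 1)) hCm,
        hmaps]
    have hm : MeasurableSet {ω : ℕ → 𝒳 | T ω ≤ ((k - 1 : ℕ) : ℕ∞)} :=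
      natF_le 𝒳 (k - 1) _ (hT (k - 1))
    rw [hset, measure_compl hm (measure_ne_top _ _), measure_compl hm (measure_ne_top _ _),
      heq, measure_univ, measure_univ]
  rw [hnum, hden]
end
end

section
/- ARL block selection (Lemma 2.6): Let P be a probability measure on 𝒳, let T be a stopping time with respect to (F_n) with E_{P^∞}[T] ≥ γ for some γ > 0, and let f be a positive integer. Partition ℕ into the disjoint blocks C_r := {(r−1)f+1, …, rf} for r ≥ 1, and set x_r := P^∞(T ∈ C_r) and y_r := P^∞(T ≥ (r−1)f+1). Then Σ_{r≥1} y_r ≥ E_{P^∞}[T]/f ≥ γ/f; if moreover T < ∞ P^∞-almost surely then Σ_{r≥1} x_r = 1; and in all cases there exists r⋆ with y_{r⋆} > 0 and x_{r⋆}/y_{r⋆} ≤ f/γ, equivalently there exists k⋆ := (r⋆−1)f+1 with P^∞(k⋆ ≤ T ≤ k⋆+f−1 | T ≥ k⋆) ≤ f/γ. -/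
open MeasureTheory Filter Set
open scoped ENNReal NNReal Classical

noncomputable section

variable {𝒳 : Type*} [MeasurableSpace 𝒳]

/-- **Lemma 2.6 (ARL block selection).** With blocks `C_r = {(r-1)f+1, …, rf}`,
`x_r = P^∞(T ∈ C_r)`, `y_r = P^∞(T ≥ (r-1)f+1)`: `Σ_{r≥1} y_r ≥ E[T]/f ≥ γ/f`; if `T < ∞`
a.s. then `Σ_{r≥1} x_r = 1`; and there is `r⋆ ≥ 1` with `y_{r⋆} > 0` and
`x_{r⋆}/y_{r⋆} ≤ f/γ`, i.e. for `k⋆ = (r⋆-1)f+1`,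
`P^∞(k⋆ ≤ T ≤ k⋆+f-1 ∣ T ≥ k⋆) ≤ f/γ`. -/
theorem ARL_block_selection
    (P : Measure 𝒳) (hP : IsProbabilityMeasure P)
    (μinf : Measure (ℕ → 𝒳)) (hμinf : IsIID P μinf)
    (T : (ℕ → 𝒳) → ℕ∞) (hT : IsStopping 𝒳 T)
    (γ : ℝ) (hγ : 0 < γ)
    (hARL : ENNReal.ofReal γ ≤ ∫⁻ ω, (T ω : ℝ≥0∞) ∂μinf)
    (f : ℕ) (hf : 0 < f) :
    let x : ℕ → ℝ≥0∞ := fun r =>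
      μinf {ω | (((r - 1) * f + 1 : ℕ) : ℕ∞) ≤ T ω ∧ T ω ≤ ((r * f : ℕ) : ℕ∞)}
    let y : ℕ → ℝ≥0∞ := fun r => μinf {ω | (((r - 1) * f + 1 : ℕ) : ℕ∞) ≤ T ω}
    (ENNReal.ofReal γ / (f : ℝ≥0∞) ≤ (∫⁻ ω, (T ω : ℝ≥0∞) ∂μinf) / (f : ℝ≥0∞) ∧
        (∫⁻ ω, (T ω : ℝ≥0∞) ∂μinf) / (f : ℝ≥0∞) ≤ ∑' r : ℕ, y (r + 1)) ∧
      (μinf {ω | T ω = ⊤} = 0 → ∑' r : ℕ, x (r + 1) = 1) ∧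
      ∃ r : ℕ, 1 ≤ r ∧ 0 < y r ∧ x r / y r ≤ (f : ℝ≥0∞) / ENNReal.ofReal γ := by
  intro x y
  haveI hprob : IsProbabilityMeasure μinf := hμinf.1
  have hγ0 : ENNReal.ofReal γ ≠ 0 := (ENNReal.ofReal_pos.mpr hγ).ne'
  have hγtop : ENNReal.ofReal γ ≠ ⊤ := ENNReal.ofReal_ne_top
  have hf0 : (f : ℝ≥0∞) ≠ 0 := by exact_mod_cast hf.ne'
  have hftop : (f : ℝ≥0∞) ≠ ⊤ := by simp
  -- measurability of {T ≤ n}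
  have hle : ∀ n : ℕ, MeasurableSet {ω : ℕ → 𝒳 | T ω ≤ (n : ℕ∞)} := by
    intro n
    obtain ⟨s, hs, hpre⟩ := MeasurableSpace.measurableSet_comap.mp (hT n)
    rw [← hpre]
    exact (measurable_pi_lambda _ fun i => measurable_pi_apply _) hs
  -- measurability of {m+1 ≤ T}
  have hge : ∀ m : ℕ, MeasurableSet {ω : ℕ → 𝒳 | ((m + 1 : ℕ) : ℕ∞) ≤ T ω} := by
    intro m
    have hset : {ω : ℕ → 𝒳 | ((m + 1 : ℕ) : ℕ∞) ≤ T ω} = {ω : ℕ → 𝒳 | T ω ≤ (m : ℕ∞)}ᶜ := by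
      ext ω
      simp only [Set.mem_setOf_eq, Set.mem_compl_iff, not_le]
      push_cast
      exact ENat.add_one_le_iff (by simp)
    rw [hset]
    exact (hle m).compl
  -- T ≥ 1 everywhere
  have h0 : {ω : ℕ → 𝒳 | T ω ≤ (0 : ℕ∞)} = ∅ := by
    obtain ⟨s, hs, hpre⟩ := MeasurableSpace.measurableSet_comap.mp (hT 0)
    simp only [Nat.cast_zero] at hpre
    have hconst : (fun (ω : ℕ → 𝒳) (i : Fin 0) => ω (i : ℕ))
        = fun _ => (fun i : Fin 0 => i.elim0) := by
      funext ω i; exact i.elim0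
    rw [hconst] at hpre
    by_cases hmem : (fun i : Fin 0 => i.elim0) ∈ s
    · exfalso
      have huniv : {ω : ℕ → 𝒳 | T ω ≤ (0 : ℕ∞)} = Set.univ := by
        rw [← hpre]; simp [Set.preimage_const, hmem]
      have hz : ∀ ω : ℕ → 𝒳, T ω = 0 := by
        intro ω
        have : ω ∈ {ω : ℕ → 𝒳 | T ω ≤ (0 : ℕ∞)} := huniv ▸ Set.mem_univ ω
        simpa using this
      have : ∫⁻ ω, (T ω : ℝ≥0∞) ∂μinf = 0 := by
        simp [hz]
      rw [this] at hARL
      exact hγ0 (le_antisymm hARL zero_le)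
    · rw [← hpre]; simp [Set.preimage_const, hmem]
  have hpos : ∀ ω : ℕ → 𝒳, (1 : ℕ∞) ≤ T ω := by
    intro ω
    have : ω ∉ ({ω : ℕ → 𝒳 | T ω ≤ (0 : ℕ∞)}) := h0 ▸ Set.notMem_empty ω
    exact ENat.one_le_iff_ne_zero.mpr (by simpa using this)
  -- pointwise bound on T
  have hpt : ∀ ω : ℕ → 𝒳, (T ω : ℝ≥0∞)
      ≤ ∑' r : ℕ, Set.indicator {ω : ℕ → 𝒳 | ((r * f + 1 : ℕ) : ℕ∞) ≤ T ω}
          (fun _ => (f : ℝ≥0∞)) ω := by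
    intro ω
    cases hTω : T ω with
    | top =>
      have hind : ∀ r : ℕ, Set.indicator {ω : ℕ → 𝒳 | ((r * f + 1 : ℕ) : ℕ∞) ≤ T ω}
          (fun _ => (f : ℝ≥0∞)) ω = (f : ℝ≥0∞) := by
        intro r
        exact Set.indicator_of_mem (by simp [Set.mem_setOf_eq, hTω]) _
      rw [tsum_congr hind, ENNReal.tsum_const_eq_top_of_ne_zero hf0]
      simp
    | coe n =>
      rcases Nat.eq_zero_or_pos n with hn | hn
      · simp [hn]
      have hdm := Nat.div_add_mod (n - 1) f
      have hmod : (n - 1) % f < f := Nat.mod_lt _ hf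
      set q := (n - 1) / f + 1 with hq
      have hmem : ∀ r : ℕ, r < q → ω ∈ {ω : ℕ → 𝒳 | ((r * f + 1 : ℕ) : ℕ∞) ≤ T ω} := by
        intro r hr
        have hr' : r ≤ (n - 1) / f := by omega
        have hfr : f * r ≤ f * ((n - 1) / f) := Nat.mul_le_mul_left f hr'
        have hnat : r * f + 1 ≤ n := by
          rw [mul_comm r f]; omega
        simp only [Set.mem_setOf_eq, hTω]
        exact_mod_cast hnat
      have hfin : ∑ r ∈ Finset.range q, Set.indicator {ω : ℕ → 𝒳 | ((r * f + 1 : ℕ) : ℕ∞) ≤ T ω}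
          (fun _ => (f : ℝ≥0∞)) ω = (q * f : ℕ) := by
        rw [Finset.sum_congr rfl (fun r hr => Set.indicator_of_mem
          (hmem r (Finset.mem_range.mp hr)) _)]
        simp [mul_comm]
      have hnq : n ≤ q * f := by
        have he : q * f = f * ((n - 1) / f) + f := by rw [hq]; ring
        omega
      calc ((n : ℕ∞) : ℝ≥0∞) = (n : ℝ≥0∞) := by simp
        _ ≤ ((q * f : ℕ) : ℝ≥0∞) := by exact_mod_cast hnq
        _ = ∑ r ∈ Finset.range q, Set.indicator {ω : ℕ → 𝒳 | ((r * f + 1 : ℕ) : ℕ∞) ≤ T ω}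
            (fun _ => (f : ℝ≥0∞)) ω := hfin.symm
        _ ≤ _ := ENNReal.sum_le_tsum _
  -- integral bound
  have hInt : ∫⁻ ω, (T ω : ℝ≥0∞) ∂μinf ≤ (f : ℝ≥0∞) * ∑' r : ℕ, y (r + 1) := by
    calc ∫⁻ ω, (T ω : ℝ≥0∞) ∂μinf
        ≤ ∫⁻ ω, ∑' r : ℕ, Set.indicator {ω : ℕ → 𝒳 | ((r * f + 1 : ℕ) : ℕ∞) ≤ T ω}
            (fun _ => (f : ℝ≥0∞)) ω ∂μinf := lintegral_mono hpt
      _ = ∑' r : ℕ, ∫⁻ ω, Set.indicator {ω : ℕ → 𝒳 | ((r * f + 1 : ℕ) : ℕ∞) ≤ T ω}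
            (fun _ => (f : ℝ≥0∞)) ω ∂μinf :=
          lintegral_tsum (fun r =>
            (Measurable.indicator measurable_const (hge (r * f))).aemeasurable)
      _ = ∑' r : ℕ, (f : ℝ≥0∞) * μinf {ω : ℕ → 𝒳 | ((r * f + 1 : ℕ) : ℕ∞) ≤ T ω} := by
          refine tsum_congr fun r => ?_
          rw [lintegral_indicator (hge (r * f)) _]; simp
      _ = (f : ℝ≥0∞) * ∑' r : ℕ, y (r + 1) := by
          rw [ENNReal.tsum_mul_left]
          exact congrArg _ (tsum_congr fun r => rfl)
  have hsum_y : (∫⁻ ω, (T ω : ℝ≥0∞) ∂μinf) / (f : ℝ≥0∞) ≤ ∑' r : ℕ, y (r + 1) := by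
    rw [ENNReal.div_le_iff hf0 hftop, mul_comm]
    exact hInt
  -- the block sets
  set A : ℕ → Set (ℕ → 𝒳) := fun r =>
    {ω : ℕ → 𝒳 | ((r * f + 1 : ℕ) : ℕ∞) ≤ T ω ∧ T ω ≤ (((r + 1) * f : ℕ) : ℕ∞)} with hA
  have hxA : ∀ r : ℕ, x (r + 1) = μinf (A r) := fun r => rfl
  have hAmeas : ∀ r : ℕ, MeasurableSet (A r) := by
    intro r
    have : A r = {ω : ℕ → 𝒳 | ((r * f + 1 : ℕ) : ℕ∞) ≤ T ω}
        ∩ {ω : ℕ → 𝒳 | T ω ≤ (((r + 1) * f : ℕ) : ℕ∞)} := rfl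
    rw [this]
    exact (hge (r * f)).inter (hle ((r + 1) * f))
  have hAdisj : Pairwise (Function.onFun Disjoint A) := by
    have key : ∀ r s : ℕ, r < s → ∀ ω : ℕ → 𝒳, ω ∈ A r → ω ∉ A s := by
      intro r s hrs ω hr hs
      obtain ⟨_, h2⟩ := hr
      obtain ⟨h3, _⟩ := hs
      have hcast : (s * f + 1 : ℕ) ≤ ((r + 1) * f : ℕ) := by
        exact_mod_cast h3.trans h2
      have : (r + 1) * f ≤ s * f := Nat.mul_le_mul_right f hrs
      omega
    intro r s hne
    rcases hne.lt_or_gt with h | h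
    · exact Set.disjoint_right.mpr fun ω hs hr => key r s h ω hr hs
    · exact Set.disjoint_left.mpr fun ω hs hr => key s r h ω hr hs
  have hAunion : (⋃ r : ℕ, A r) = {ω : ℕ → 𝒳 | T ω ≠ ⊤} := by
    ext ω
    simp only [Set.mem_iUnion, Set.mem_setOf_eq]
    constructor
    · rintro ⟨r, _, h2⟩ heq
      rw [heq] at h2
      exact (top_le_iff.mp h2 ▸ ENat.coe_lt_top (((r + 1) * f : ℕ))).ne rfl
    · intro hne
      cases hTn : T ω with
      | top => exact absurd hTn hne
      | coe n =>
        have hn1 : 1 ≤ n := by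
          have := hpos ω
          rw [hTn] at this
          exact_mod_cast this
        refine ⟨(n - 1) / f, ?_, ?_⟩
        · have hd : (n - 1) / f * f = f * ((n - 1) / f) := mul_comm _ f
          have hdm := Nat.div_add_mod (n - 1) f
          have hnat : (n - 1) / f * f + 1 ≤ n := by omega
          rw [hTn]
          exact_mod_cast hnat
        · have hd : ((n - 1) / f + 1) * f = f * ((n - 1) / f) + f := by ring
          have hdm := Nat.div_add_mod (n - 1) f
          have hmod : (n - 1) % f < f := Nat.mod_lt _ hf
          have hnat : n ≤ ((n - 1) / f + 1) * f := by omega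
          rw [hTn]
          exact_mod_cast hnat
  have hsum_x_eq : ∑' r : ℕ, x (r + 1) = μinf {ω : ℕ → 𝒳 | T ω ≠ ⊤} := by
    rw [tsum_congr hxA, ← measure_iUnion hAdisj hAmeas, hAunion]
  have hsum_x_le : ∑' r : ℕ, x (r + 1) ≤ 1 := by
    rw [hsum_x_eq]
    exact prob_le_one
  refine ⟨⟨ENNReal.div_le_div_right hARL _, hsum_y⟩, ?_, ?_⟩
  · -- sum of x equals 1 when T < ∞ a.s.
    intro hnull
    rw [hsum_x_eq]
    refine le_antisymm prob_le_one ?_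
    have hcover : (Set.univ : Set (ℕ → 𝒳))
        ⊆ {ω : ℕ → 𝒳 | T ω ≠ ⊤} ∪ {ω : ℕ → 𝒳 | T ω = ⊤} := by
      intro ω _
      by_cases h : T ω = ⊤
      · exact Or.inr h
      · exact Or.inl h
    calc (1 : ℝ≥0∞) = μinf Set.univ := (measure_univ).symm
      _ ≤ μinf ({ω : ℕ → 𝒳 | T ω ≠ ⊤} ∪ {ω : ℕ → 𝒳 | T ω = ⊤}) := measure_mono hcover
      _ ≤ μinf {ω : ℕ → 𝒳 | T ω ≠ ⊤} + μinf {ω : ℕ → 𝒳 | T ω = ⊤} := measure_union_le _ _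
      _ = μinf {ω : ℕ → 𝒳 | T ω ≠ ⊤} := by rw [hnull, add_zero]
  · -- existence of a good block
    set c : ℝ≥0∞ := (f : ℝ≥0∞) / ENNReal.ofReal γ with hc
    by_contra hcon
    push_neg at hcon
    have hcon' : ∀ r : ℕ, 0 < y (r + 1) → c < x (r + 1) / y (r + 1) := fun r hy =>
      hcon (r + 1) (Nat.succ_le_succ (Nat.zero_le r)) hy
    have hxy : ∀ r : ℕ, x (r + 1) ≤ y (r + 1) := fun r =>
      measure_mono fun ω hω => hω.1
    have hytop : ∀ r : ℕ, y (r + 1) ≠ ⊤ := fun r => measure_ne_top _ _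
    -- pointwise c * y ≤ x
    have hptw : ∀ r : ℕ, c * y (r + 1) ≤ x (r + 1) := by
      intro r
      by_cases hy : y (r + 1) = 0
      · simp [hy, (le_antisymm ((hxy r).trans_eq hy) zero_le)]
      · have hlt := hcon' r (pos_iff_ne_zero.mpr hy)
        have := mul_le_mul_left hlt.le (y (r + 1))
        rwa [ENNReal.div_mul_cancel hy (hytop r)] at this
    -- c * Σ y ≥ 1
    have hcy : (1 : ℝ≥0∞) ≤ c * ∑' r : ℕ, y (r + 1) := by
      have h1 : c * (ENNReal.ofReal γ / (f : ℝ≥0∞)) = 1 := by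
        rw [hc, div_eq_mul_inv, div_eq_mul_inv]
        have e1 : (f : ℝ≥0∞) * (f : ℝ≥0∞)⁻¹ = 1 := ENNReal.mul_inv_cancel hf0 hftop
        have e2 : ENNReal.ofReal γ * (ENNReal.ofReal γ)⁻¹ = 1 :=
          ENNReal.mul_inv_cancel hγ0 hγtop
        calc (f : ℝ≥0∞) * (ENNReal.ofReal γ)⁻¹ * (ENNReal.ofReal γ * (f : ℝ≥0∞)⁻¹)
            = ((f : ℝ≥0∞) * (f : ℝ≥0∞)⁻¹) * (ENNReal.ofReal γ * (ENNReal.ofReal γ)⁻¹) := by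
              ring
          _ = 1 := by rw [e1, e2, one_mul]
      have hsum_y' : ENNReal.ofReal γ / (f : ℝ≥0∞) ≤ ∑' r : ℕ, y (r + 1) :=
        (ENNReal.div_le_div_right hARL _).trans hsum_y
      calc (1 : ℝ≥0∞) = c * (ENNReal.ofReal γ / (f : ℝ≥0∞)) := h1.symm
        _ ≤ c * ∑' r : ℕ, y (r + 1) := mul_le_mul_right hsum_y' c
    -- there is some r with y (r+1) > 0
    have hex : ∃ r : ℕ, 0 < y (r + 1) := by
      by_contra hno
      push_neg at hno
      have : ∑' r : ℕ, y (r + 1) = 0 := by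
        rw [tsum_congr fun r => le_antisymm (hno r) zero_le]
        simp
      rw [this, mul_zero] at hcy
      exact one_ne_zero (le_antisymm (hcy.trans (le_refl _)) zero_le : (1 : ℝ≥0∞) = 0)
    obtain ⟨r0, hr0⟩ := hex
    -- strict inequality at r0
    have hstrict : c * y (r0 + 1) < x (r0 + 1) := by
      have hlt := hcon' r0 hr0
      have := ENNReal.mul_lt_mul_left (hr0.ne') (hytop r0) hlt
      rwa [ENNReal.div_mul_cancel (hr0.ne') (hytop r0)] at this
    have hfin : ∑' r : ℕ, c * y (r + 1) ≠ ⊤ :=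
      ne_top_of_le_ne_top (by simp) ((ENNReal.tsum_le_tsum hptw).trans hsum_x_le)
    have hfinal : ∑' r : ℕ, c * y (r + 1) < ∑' r : ℕ, x (r + 1) :=
      ENNReal.tsum_lt_tsum hfin hptw hstrict
    have : (1 : ℝ≥0∞) < 1 := by
      calc (1 : ℝ≥0∞) ≤ c * ∑' r : ℕ, y (r + 1) := hcy
        _ = ∑' r : ℕ, c * y (r + 1) := ENNReal.tsum_mul_left.symm
        _ < ∑' r : ℕ, x (r + 1) := hfinal
        _ ≤ 1 := hsum_x_le
    exact lt_irrefl _ this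
end
end

section
/- ARL calibration of the bounded-mean e-detector (Theorem 3.1, part 1): For every γ > 0 and every probability measure P on [0,1] with mean E_P[X] ≤ m, the stopping time T_γ^{BM} satisfies E_{P^∞}[T_γ^{BM}] ≥ γ (where the expectation equals +∞ if T_γ^{BM} = ∞ with positive probability). Consequently inf_{P∈𝒫_m} E_{P^∞}[T_γ^{BM}] ≥ γ. -/
open MeasureTheory Filter Set
open scoped ENNReal NNReal Classical

noncomputable section

variable {𝒳 : Type*} [MeasurableSpace 𝒳]

/-! ### The bounded-mean detection setting: `𝒳 = [0,1] ⊆ ℝ`, baseline mean `m ∈ (0,1)` -/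

/-- The pre-change class `𝒫_m`: probability measures on `[0,1]` with mean `≤ m`. -/
def PclassBM (m : ℝ) : Set (Measure ℝ) :=
  {P | IsProbabilityMeasure P ∧ P (Set.Icc (0 : ℝ) 1)ᶜ = 0 ∧ ∫ x, x ∂P ≤ m}

/-- The post-change class `𝒬_c`: probability measures on `[0,1]` with mean `> c`. -/
def QclassBM (c : ℝ) : Set (Measure ℝ) :=
  {Q | IsProbabilityMeasure Q ∧ Q (Set.Icc (0 : ℝ) 1)ᶜ = 0 ∧ c < ∫ x, x ∂Q}

/-- `KL_inf(Q; m) = inf_{P ∈ 𝒫_m} KL(Q‖P)`. -/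
def KLinfBM (Q : Measure ℝ) (m : ℝ) : ℝ≥0∞ := KLinf Q (PclassBM m)

/-- The betting factor `L_λ(x) = 1 + λ(x/m − 1)`. -/
def Lfun (m lam x : ℝ) : ℝ := 1 + lam * (x / m - 1)

/-- The Shiryaev–Roberts statistic `R_n^{(λ)} = Σ_{k=1}^n ∏_{i=k}^n L_λ(X_i)` (with
`X_i ω = ω (i-1)`, so `R_n^{(λ)} = Σ_{k<n} ∏_{k ≤ i < n} L_λ(ω i)`), and `R_0^{(λ)} = 0`. -/
def SR (m lam : ℝ) (n : ℕ) (ω : ℕ → ℝ) : ℝ :=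
  ∑ k ∈ Finset.range n, ∏ i ∈ Finset.Ico k n, Lfun m lam (ω i)

/-- The mixture statistic `M_n = Σ_{λ∈Λ} w_λ R_n^{(λ)}`. -/
def mixSR (m : ℝ) (Lam : Set ℝ) (w : ℝ → ℝ) (n : ℕ) (ω : ℕ → ℝ) : ℝ :=
  ∑' lam : Lam, w lam * SR m lam n ω

/-- The bounded-mean detector `T_γ^{BM} = inf{n ≥ 1 : M_n ≥ γ}` (`= ∞` if no such `n`). -/
def TBM (m : ℝ) (Lam : Set ℝ) (w : ℝ → ℝ) (γ : ℝ) (ω : ℕ → ℝ) : ℕ∞ :=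
  ⨅ n ∈ {n : ℕ | 1 ≤ n ∧ γ ≤ mixSR m Lam w n ω}, (n : ℕ∞)

/-! ### Auxiliary lemmas for the ARL calibration theorem -/

section ARLAux

lemma SR_zero (m lam : ℝ) (ω : ℕ → ℝ) : SR m lam 0 ω = 0 := by
  simp [SR]

lemma SR_succ (m lam : ℝ) (n : ℕ) (ω : ℕ → ℝ) :
    SR m lam (n + 1) ω = (SR m lam n ω + 1) * Lfun m lam (ω n) := by
  unfold SR
  rw [Finset.sum_range_succ, add_mul, one_mul, Finset.sum_mul]
  congr 1
  · exact Finset.sum_congr rfl fun k hk =>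
      Finset.prod_Ico_succ_top (le_of_lt (Finset.mem_range.mp hk)) _
  · rw [Nat.Ico_succ_singleton, Finset.prod_singleton]

lemma measurable_Lfun (m lam : ℝ) : Measurable (Lfun m lam) := by
  unfold Lfun; fun_prop

lemma measurable_SR (m lam : ℝ) (n : ℕ) : Measurable (SR m lam n) := by
  unfold SR
  exact Finset.measurable_sum _ fun k _ => Finset.measurable_prod _ fun i _ =>
    (measurable_Lfun m lam).comp (measurable_pi_apply i)

lemma SR_congr (m lam : ℝ) (n : ℕ) {ω ω' : ℕ → ℝ} (h : ∀ i < n, ω i = ω' i) :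
    SR m lam n ω = SR m lam n ω' := by
  unfold SR
  exact Finset.sum_congr rfl fun k hk => Finset.prod_congr rfl fun i hi =>
    by rw [h i (Finset.mem_Ico.mp hi).2]

lemma Lfun_pos {m lam x : ℝ} (hm : m ∈ Set.Ioo (0:ℝ) 1) (hl : lam ∈ Set.Ioo (0:ℝ) 1)
    (hx : x ∈ Set.Icc (0:ℝ) 1) : 0 < Lfun m lam x := by
  obtain ⟨hm0, hm1⟩ := hm; obtain ⟨hl0, hl1⟩ := hl
  have h1 : 0 ≤ x / m := div_nonneg hx.1 hm0.le
  unfold Lfun; nlinarith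

lemma Lfun_le {m lam x : ℝ} (hm : m ∈ Set.Ioo (0:ℝ) 1) (hl : lam ∈ Set.Ioo (0:ℝ) 1)
    (hx : x ∈ Set.Icc (0:ℝ) 1) : Lfun m lam x ≤ 1 / m := by
  obtain ⟨hm0, hm1⟩ := hm; obtain ⟨hl0, hl1⟩ := hl
  have h1 : x / m ≤ 1 / m := by
    gcongr
    exact hx.2
  have h2 : (1:ℝ) < 1 / m := by rw [lt_div_iff₀ hm0]; nlinarith
  unfold Lfun; nlinarith

lemma SR_nonneg {m lam : ℝ} (hm : m ∈ Set.Ioo (0:ℝ) 1) (hl : lam ∈ Set.Ioo (0:ℝ) 1)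
    {n : ℕ} {ω : ℕ → ℝ} (hω : ∀ i < n, ω i ∈ Set.Icc (0:ℝ) 1) :
    0 ≤ SR m lam n ω := by
  apply Finset.sum_nonneg
  intro k hk
  apply Finset.prod_nonneg
  intro i hi
  exact (Lfun_pos hm hl (hω i (Finset.mem_Ico.mp hi).2)).le

lemma SR_le {m lam : ℝ} (hm : m ∈ Set.Ioo (0:ℝ) 1) (hl : lam ∈ Set.Ioo (0:ℝ) 1)
    {n : ℕ} {ω : ℕ → ℝ} (hω : ∀ i < n, ω i ∈ Set.Icc (0:ℝ) 1) :
    SR m lam n ω ≤ (n : ℝ) * (1 / m) ^ n := by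
  have hm1 : (1:ℝ) ≤ 1 / m := by
    rw [le_div_iff₀ hm.1]; nlinarith [hm.2]
  have hbd : ∀ k ∈ Finset.range n,
      (∏ i ∈ Finset.Ico k n, Lfun m lam (ω i)) ≤ (1 / m) ^ n := by
    intro k hk
    calc (∏ i ∈ Finset.Ico k n, Lfun m lam (ω i))
        ≤ ∏ _i ∈ Finset.Ico k n, (1 / m) := by
          apply Finset.prod_le_prod
          · exact fun i hi => (Lfun_pos hm hl (hω i (Finset.mem_Ico.mp hi).2)).le
          · exact fun i hi => Lfun_le hm hl (hω i (Finset.mem_Ico.mp hi).2)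
      _ = (1 / m) ^ (n - k) := by rw [Finset.prod_const, Nat.card_Ico]
      _ ≤ (1 / m) ^ n := pow_le_pow_right₀ hm1 (Nat.sub_le n k)
  calc SR m lam n ω ≤ ∑ _k ∈ Finset.range n, (1 / m) ^ n := Finset.sum_le_sum hbd
    _ = (n : ℝ) * (1 / m) ^ n := by rw [Finset.sum_const, Finset.card_range, nsmul_eq_mul]

end ARLAux

open scoped Topology

section ARLMain

variable {m : ℝ} {Lam : Set ℝ} {w : ℝ → ℝ}

/-- ENNReal version of the mixture statistic. -/
def MixE (m : ℝ) (Lam : Set ℝ) (w : ℝ → ℝ) (n : ℕ) (ω : ℕ → ℝ) : ℝ≥0∞ :=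
  ∑' l : Lam, ENNReal.ofReal (w l) * ENNReal.ofReal (SR m l n ω)

lemma measurable_MixE (hc : Lam.Countable) (n : ℕ) : Measurable (MixE m Lam w n) := by
  haveI := hc.to_subtype
  exact Measurable.ennreal_tsum fun l =>
    measurable_const.mul (ENNReal.measurable_ofReal.comp (measurable_SR m l n))

lemma MixE_congr (n : ℕ) {ω ω' : ℕ → ℝ} (h : ∀ i < n, ω i = ω' i) :
    MixE m Lam w n ω = MixE m Lam w n ω' :=
  tsum_congr fun l => by rw [SR_congr m l n h]

lemma MixE_zero (ω : ℕ → ℝ) : MixE m Lam w 0 ω = 0 := by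
  simp [MixE, SR_zero]

/-- Extension of a finite vector by zeros. -/
def extFin (n : ℕ) (y : Fin n → ℝ) : ℕ → ℝ := fun i => if h : i < n then y ⟨i, h⟩ else 0

lemma measurable_extFin (n : ℕ) : Measurable (extFin n) := by
  apply measurable_pi_lambda
  intro i
  by_cases h : i < n
  · simpa [extFin, h] using measurable_pi_apply (⟨i, h⟩ : Fin n)
  · simpa [extFin, h] using measurable_const

lemma extFin_proj (n : ℕ) (ω : ℕ → ℝ) {i : ℕ} (h : i < n) :
    extFin n (fun j : Fin n => ω (j : ℕ)) i = ω i := by simp [extFin, h]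

/-- The "no alarm by time n and good coordinates" event, on the finite product space. -/
def AsetFin (m : ℝ) (Lam : Set ℝ) (w : ℝ → ℝ) (γ' : ℝ≥0∞) (n : ℕ) : Set (Fin n → ℝ) :=
  {y | ∀ k ≤ n, MixE m Lam w k (extFin n y) < γ'} ∩ {y | ∀ i : Fin n, y i ∈ Set.Icc (0:ℝ) 1}

lemma measurable_AsetFin (hc : Lam.Countable) (γ' : ℝ≥0∞) (n : ℕ) :
    MeasurableSet (AsetFin m Lam w γ' n) := by
  apply MeasurableSet.inter
  · have : {y : Fin n → ℝ | ∀ k ≤ n, MixE m Lam w k (extFin n y) < γ'}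
        = ⋂ k, ⋂ _ : k ≤ n, {y | MixE m Lam w k (extFin n y) < γ'} := by
      ext y; simp
    rw [this]
    refine MeasurableSet.iInter fun k => MeasurableSet.iInter fun _ => ?_
    exact measurableSet_lt ((measurable_MixE hc k).comp (measurable_extFin n)) measurable_const
  · have : {y : Fin n → ℝ | ∀ i : Fin n, y i ∈ Set.Icc (0:ℝ) 1}
        = ⋂ i : Fin n, (fun y : Fin n → ℝ => y i) ⁻¹' Set.Icc (0:ℝ) 1 := by
      ext y; simp
    rw [this]
    exact MeasurableSet.iInter fun i => (measurableSet_Icc).preimage (measurable_pi_apply i)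

/-- The corresponding event on the infinite product space. -/
def Aset (m : ℝ) (Lam : Set ℝ) (w : ℝ → ℝ) (γ' : ℝ≥0∞) (n : ℕ) : Set (ℕ → ℝ) :=
  (fun ω (i : Fin n) => ω (i : ℕ)) ⁻¹' AsetFin m Lam w γ' n

lemma measurable_proj (n : ℕ) : Measurable (fun (ω : ℕ → ℝ) (i : Fin n) => ω (i : ℕ)) :=
  measurable_pi_lambda _ fun i => measurable_pi_apply _

lemma measurable_Aset (hc : Lam.Countable) (γ' : ℝ≥0∞) (n : ℕ) :
    MeasurableSet (Aset m Lam w γ' n) :=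
  (measurable_AsetFin hc γ' n).preimage (measurable_proj n)

lemma mem_Aset {γ' : ℝ≥0∞} {n : ℕ} {ω : ℕ → ℝ} :
    ω ∈ Aset m Lam w γ' n ↔
      (∀ k ≤ n, MixE m Lam w k ω < γ') ∧ (∀ i < n, ω i ∈ Set.Icc (0:ℝ) 1) := by
  have hcongr : ∀ k ≤ n, MixE m Lam w k (extFin n (fun j : Fin n => ω (j : ℕ)))
      = MixE m Lam w k ω := by
    intro k hk
    exact MixE_congr k fun i hi => extFin_proj n ω (lt_of_lt_of_le hi hk)
  constructor
  · rintro ⟨h1, h2⟩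
    refine ⟨fun k hk => by rw [← hcongr k hk]; exact h1 k hk, fun i hi => h2 ⟨i, hi⟩⟩
  · rintro ⟨h1, h2⟩
    exact ⟨fun k hk => by rw [hcongr k hk]; exact h1 k hk, fun i => h2 i i.2⟩

lemma Aset_antitone (γ' : ℝ≥0∞) : ∀ n : ℕ, Aset m Lam w γ' (n + 1) ⊆ Aset m Lam w γ' n := by
  intro n ω hω
  rw [mem_Aset] at hω ⊢
  exact ⟨fun k hk => hω.1 k (le_trans hk (Nat.le_succ n)),
    fun i hi => hω.2 i (lt_trans hi (Nat.lt_succ_self n))⟩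

end ARLMain

section ARLSplit

lemma iid_split (P : Measure ℝ) [IsProbabilityMeasure P] (μ : Measure (ℕ → ℝ))
    (hμ : ∀ n : ℕ, Measure.map (fun ω (i : Fin n) => ω (i : ℕ)) μ = Measure.pi fun _ : Fin n => P)
    (n : ℕ) {φ : (Fin n → ℝ) → ℝ≥0∞} (hφ : Measurable φ) {g : ℝ → ℝ≥0∞} (hg : Measurable g) :
    ∫⁻ ω, φ (fun i : Fin n => ω (i : ℕ)) * g (ω n) ∂μ
      = (∫⁻ ω, φ (fun i : Fin n => ω (i : ℕ)) ∂μ) * ∫⁻ x, g x ∂P := by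
  have hmarg : ∀ (k : ℕ) (F : (Fin k → ℝ) → ℝ≥0∞), Measurable F →
      ∫⁻ ω, F (fun i : Fin k => ω (i : ℕ)) ∂μ
        = ∫⁻ y, F y ∂(Measure.pi fun _ : Fin k => P) := by
    intro k F hF
    rw [← hμ k, lintegral_map hF (measurable_proj k)]
  set e := MeasurableEquiv.piFinSuccAbove (fun _ : Fin (n + 1) => ℝ) (Fin.last n) with he
  have hmp := measurePreserving_piFinSuccAbove (fun _ : Fin (n + 1) => P) (Fin.last n)
  set F : ℝ × (Fin n → ℝ) → ℝ≥0∞ := fun z => g z.1 * φ z.2 with hF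
  have hFmeas : Measurable F := (hg.comp measurable_fst).mul (hφ.comp measurable_snd)
  have step1 : ∫⁻ ω, φ (fun i : Fin n => ω (i : ℕ)) * g (ω n) ∂μ
      = ∫⁻ y, F (e y) ∂(Measure.pi fun _ : Fin (n + 1) => P) := by
    rw [← hmarg (n + 1) (fun y => F (e y)) (hFmeas.comp e.measurable)]
    congr 1
    funext ω
    simp only [hF, he, MeasurableEquiv.piFinSuccAbove_apply, Fin.insertNthEquiv_symm_apply,
      Fin.succAbove_last_apply, Fin.coe_castSucc, Fin.val_last]
    have hrm : ((Fin.last n).removeNth fun i : Fin (n+1) => ω (i : ℕ))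
        = fun i : Fin n => ω (i : ℕ) := by
      funext j
      simp [Fin.removeNth, Fin.succAbove_last_apply]
    rw [hrm]
    exact mul_comm (φ fun i : Fin n => ω (i : ℕ)) (g (ω n))
  rw [step1, hmp.lintegral_comp hFmeas, lintegral_prod_mul hg.aemeasurable hφ.aemeasurable,
    hmarg n φ hφ, mul_comm]

lemma coord_null (P : Measure ℝ) [IsProbabilityMeasure P] (μ : Measure (ℕ → ℝ))
    [IsProbabilityMeasure μ]
    (hμ : ∀ n : ℕ, Measure.map (fun ω (i : Fin n) => ω (i : ℕ)) μ = Measure.pi fun _ : Fin n => P)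
    (hP0 : P (Set.Icc (0:ℝ) 1)ᶜ = 0) (N : ℕ) :
    μ ((fun ω : ℕ → ℝ => ω N) ⁻¹' (Set.Icc (0:ℝ) 1)ᶜ) = 0 := by
  set g : ℝ → ℝ≥0∞ := (Set.Icc (0:ℝ) 1)ᶜ.indicator 1 with hg
  have hgmeas : Measurable g := measurable_const.indicator measurableSet_Icc.compl
  have h1 : ∫⁻ ω, (fun _ : Fin N → ℝ => (1:ℝ≥0∞)) (fun i : Fin N => ω (i : ℕ)) * g (ω N) ∂μ
      = (∫⁻ ω, (fun _ : Fin N → ℝ => (1:ℝ≥0∞)) (fun i : Fin N => ω (i : ℕ)) ∂μ)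
          * ∫⁻ x, g x ∂P :=
    iid_split P μ hμ N measurable_const hgmeas
  simp only [one_mul] at h1
  have h2 : ∫⁻ x, g x ∂P = 0 := by
    rw [hg, lintegral_indicator_one measurableSet_Icc.compl, hP0]
  set S : Set (ℕ → ℝ) := (fun ω : ℕ → ℝ => ω N) ⁻¹' (Set.Icc (0:ℝ) 1)ᶜ with hS
  have h4 : MeasurableSet S := measurableSet_Icc.compl.preimage (measurable_pi_apply N)
  have h3 : (fun ω : ℕ → ℝ => g (ω N)) = S.indicator 1 := by
    funext ω
    by_cases h : ω N ∈ (Set.Icc (0:ℝ) 1)ᶜ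
    · rw [hg, Set.indicator_of_mem h, Set.indicator_of_mem (show ω ∈ S from h)]
      rfl
    · simp only [hg, Set.indicator_of_notMem h, Set.indicator_of_notMem (show ω ∉ S from h)]
  rw [h2, mul_zero, h3, lintegral_indicator_one h4] at h1
  exact h1

lemma lint_Lfun_le {m lam : ℝ} (hm : m ∈ Set.Ioo (0:ℝ) 1) (hl : lam ∈ Set.Ioo (0:ℝ) 1)
    (P : Measure ℝ) [IsProbabilityMeasure P] (hP0 : P (Set.Icc (0:ℝ) 1)ᶜ = 0)
    (hPm : ∫ x, x ∂P ≤ m) : ∫⁻ x, ENNReal.ofReal (Lfun m lam x) ∂P ≤ 1 := by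
  have hae : ∀ᵐ x ∂P, x ∈ Set.Icc (0:ℝ) 1 := by
    rw [ae_iff]
    exact hP0
  have hid : Integrable (fun x => x) P :=
    (integrable_const (1:ℝ)).mono' measurable_id.aestronglyMeasurable
      (hae.mono fun x hx => by
        rw [Real.norm_eq_abs, abs_le]; exact ⟨by linarith [hx.1], hx.2⟩)
  have hint : Integrable (Lfun m lam) P := by
    refine (integrable_const (1/m)).mono' (measurable_Lfun m lam).aestronglyMeasurable ?_
    refine hae.mono fun x hx => ?_
    rw [Real.norm_eq_abs, abs_le]
    have hm' : (0:ℝ) ≤ 1 / m := one_div_nonneg.mpr hm.1.le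
    exact ⟨by linarith [Lfun_pos hm hl hx], Lfun_le hm hl hx⟩
  have hnn : 0 ≤ᵐ[P] Lfun m lam := hae.mono fun x hx => (Lfun_pos hm hl hx).le
  rw [← ofReal_integral_eq_lintegral_ofReal hint hnn, show (1:ℝ≥0∞) = ENNReal.ofReal 1 by simp]
  apply ENNReal.ofReal_le_ofReal
  have heq : Lfun m lam = fun x => (1 - lam) + (lam / m) * x := by
    funext x; unfold Lfun; field_simp; ring
  rw [heq, integral_add (integrable_const _) (hid.const_mul _), integral_const,
    integral_const_mul]
  simp only [measure_univ, probReal_univ, ENNReal.toReal_one, smul_eq_mul, one_mul]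
  have h1 : (lam / m) * ∫ x, x ∂P ≤ (lam / m) * m :=
    mul_le_mul_of_nonneg_left hPm (div_nonneg hl.1.le hm.1.le)
  have h2 : (lam / m) * m = lam := div_mul_cancel₀ lam hm.1.ne'
  linarith

end ARLSplit

section ARLKey

lemma key_step
    (m : ℝ) (hm : m ∈ Set.Ioo (0 : ℝ) 1)
    (Lam : Set ℝ) (hLsub : Lam ⊆ Set.Ioo (0 : ℝ) 1) (hLcount : Lam.Countable)
    (w : ℝ → ℝ) (hw : ∀ lam ∈ Lam, 0 < w lam)
    (hwsum : HasSum (fun lam : Lam => w lam) 1)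
    (γ' : ℝ≥0∞)
    (P : Measure ℝ) [IsProbabilityMeasure P] (hP0 : P (Set.Icc (0:ℝ) 1)ᶜ = 0)
    (hPm : ∫ x, x ∂P ≤ m)
    (μ : Measure (ℕ → ℝ)) [IsProbabilityMeasure μ]
    (hμ : ∀ n : ℕ, Measure.map (fun ω (i : Fin n) => ω (i : ℕ)) μ = Measure.pi fun _ : Fin n => P)
    (N : ℕ) :
    ∫⁻ ω in Aset m Lam w γ' N, MixE m Lam w (N + 1) ω ∂μ
      ≤ (∫⁻ ω in Aset m Lam w γ' N, MixE m Lam w N ω ∂μ) + μ (Aset m Lam w γ' N) := by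
  haveI := hLcount.to_subtype
  have hw1 : ∑' l : Lam, ENNReal.ofReal (w l) = 1 := by
    rw [← ENNReal.ofReal_one, ← hwsum.tsum_eq]
    exact (ENNReal.ofReal_tsum_of_nonneg (fun l : Lam => (hw l l.2).le) hwsum.summable).symm
  set A := Aset m Lam w γ' N with hA
  have hAm : MeasurableSet A := measurable_Aset hLcount γ' N
  set f : Lam → (ℕ → ℝ) → ℝ≥0∞ :=
    fun l ω => A.indicator (fun ω' => ENNReal.ofReal (SR m l N ω' + 1)) ω with hf
  have hfmeas : ∀ l : Lam, Measurable (f l) := fun l =>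
    (ENNReal.measurable_ofReal.comp ((measurable_SR m l N).add_const 1)).indicator hAm
  set g : Lam → ℝ → ℝ≥0∞ := fun l x => ENNReal.ofReal (Lfun m l x) with hgdef
  have hgmeas : ∀ l : Lam, Measurable (g l) := fun l =>
    ENNReal.measurable_ofReal.comp (measurable_Lfun m l)
  have hgood : ∀ ω ∈ A, ∀ i < N, ω i ∈ Set.Icc (0:ℝ) 1 := fun ω hω => (mem_Aset.mp hω).2
  have hpt : ∀ ω, A.indicator (MixE m Lam w (N + 1)) ω
      = ∑' l : Lam, ENNReal.ofReal (w l) * (f l ω * g l (ω N)) := by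
    intro ω
    by_cases hω : ω ∈ A
    · rw [Set.indicator_of_mem hω, MixE]
      refine tsum_congr fun l => ?_
      have h0 : (0:ℝ) ≤ SR m l N ω + 1 := by
        linarith [SR_nonneg hm (hLsub l.2) (hgood ω hω)]
      rw [hf]
      simp only []
      rw [Set.indicator_of_mem hω, SR_succ, ENNReal.ofReal_mul h0]
    · rw [Set.indicator_of_notMem hω]
      symm
      simp [hf, Set.indicator_of_notMem hω]
  calc ∫⁻ ω in A, MixE m Lam w (N + 1) ω ∂μ
      = ∫⁻ ω, A.indicator (MixE m Lam w (N + 1)) ω ∂μ := (lintegral_indicator hAm _).symm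
    _ = ∑' l : Lam, ∫⁻ ω, ENNReal.ofReal (w l) * (f l ω * g l (ω N)) ∂μ := by
        simp_rw [hpt]
        exact lintegral_tsum fun l => (measurable_const.mul
          ((hfmeas l).mul ((hgmeas l).comp (measurable_pi_apply N)))).aemeasurable
    _ = ∑' l : Lam, ENNReal.ofReal (w l) * ∫⁻ ω, f l ω * g l (ω N) ∂μ :=
        tsum_congr fun l => lintegral_const_mul _
          ((hfmeas l).mul ((hgmeas l).comp (measurable_pi_apply N)))
    _ ≤ ∑' l : Lam, ENNReal.ofReal (w l) * ∫⁻ ω, f l ω ∂μ := by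
        refine ENNReal.tsum_le_tsum fun l => mul_le_mul_right ?_ _
        set φ : (Fin N → ℝ) → ℝ≥0∞ := fun y =>
          (AsetFin m Lam w γ' N).indicator
            (fun y' => ENNReal.ofReal (SR m l N (extFin N y') + 1)) y with hφ
        have hφmeas : Measurable φ :=
          (ENNReal.measurable_ofReal.comp
            (((measurable_SR m l N).comp (measurable_extFin N)).add_const 1)).indicator
            (measurable_AsetFin hLcount γ' N)
        have hrepr : f l = fun ω => φ (fun i : Fin N => ω (i : ℕ)) := by
          funext ω
          by_cases hω : ω ∈ A
          · have hω' : (fun i : Fin N => ω (i : ℕ)) ∈ AsetFin m Lam w γ' N := hω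
            rw [hf]
            simp only []
            rw [Set.indicator_of_mem hω, hφ]
            simp only []
            rw [Set.indicator_of_mem hω']
            congr 2
            exact SR_congr m l N fun i hi => (extFin_proj N ω hi).symm
          · have hω' : (fun i : Fin N => ω (i : ℕ)) ∉ AsetFin m Lam w γ' N := hω
            rw [hf]
            simp only []
            rw [Set.indicator_of_notMem hω, hφ]
            simp only []
            rw [Set.indicator_of_notMem hω']
        rw [hrepr, iid_split P μ hμ N hφmeas (hgmeas l)]
        calc (∫⁻ ω, φ (fun i : Fin N => ω (i : ℕ)) ∂μ) * ∫⁻ x, g l x ∂P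
            ≤ (∫⁻ ω, φ (fun i : Fin N => ω (i : ℕ)) ∂μ) * 1 :=
              mul_le_mul_right (lint_Lfun_le hm (hLsub l.2) P hP0 hPm) _
          _ = ∫⁻ ω, φ (fun i : Fin N => ω (i : ℕ)) ∂μ := mul_one _
    _ = ∫⁻ ω, ∑' l : Lam, ENNReal.ofReal (w l) * f l ω ∂μ := by
        rw [lintegral_tsum fun l => ((hfmeas l).const_mul _).aemeasurable]
        exact tsum_congr fun l => (lintegral_const_mul _ (hfmeas l)).symm
    _ = ∫⁻ ω, A.indicator (fun ω' => MixE m Lam w N ω' + 1) ω ∂μ := by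
        congr 1
        funext ω
        by_cases hω : ω ∈ A
        · rw [Set.indicator_of_mem hω]
          have hgd := hgood ω hω
          calc ∑' l : Lam, ENNReal.ofReal (w l) * f l ω
              = ∑' l : Lam, (ENNReal.ofReal (w l) * ENNReal.ofReal (SR m l N ω)
                  + ENNReal.ofReal (w l)) := by
                refine tsum_congr fun l => ?_
                rw [hf]
                simp only []
                rw [Set.indicator_of_mem hω,
                  ENNReal.ofReal_add (SR_nonneg hm (hLsub l.2) hgd) zero_le_one, mul_add,
                  ENNReal.ofReal_one, mul_one]
            _ = MixE m Lam w N ω + 1 := by rw [ENNReal.tsum_add, hw1]; rfl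
        · rw [Set.indicator_of_notMem hω]
          simp [hf, Set.indicator_of_notMem hω]
    _ = (∫⁻ ω in A, MixE m Lam w N ω ∂μ) + μ A := by
        rw [lintegral_indicator hAm, lintegral_add_right _ measurable_const, setLIntegral_one]

end ARLKey

/-- **Theorem 3.1, part 1 (ARL calibration of the bounded-mean e-detector).** For every
`γ > 0` and every `P ∈ 𝒫_m`, `E_{P^∞}[T_γ^{BM}] ≥ γ`; consequently
`inf_{P ∈ 𝒫_m} E_{P^∞}[T_γ^{BM}] ≥ γ`. -/
theorem ARL_calibration_bounded_mean
    (m : ℝ) (hm : m ∈ Set.Ioo (0 : ℝ) 1)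
    (Lam : Set ℝ) (hLsub : Lam ⊆ Set.Ioo (0 : ℝ) 1) (hLcount : Lam.Countable)
    (hLdense : ∀ x ∈ Set.Ioo (0 : ℝ) 1, x ∈ closure Lam)
    (w : ℝ → ℝ) (hw : ∀ lam ∈ Lam, 0 < w lam)
    (hwsum : HasSum (fun lam : Lam => w lam) 1)
    (γ : ℝ) (hγ : 0 < γ)
    (P : Measure ℝ) (hP : P ∈ PclassBM m)
    (μinf : Measure (ℕ → ℝ)) (hμinf : IsIID P μinf) :
    ENNReal.ofReal γ ≤ ∫⁻ ω, (TBM m Lam w γ ω : ℝ≥0∞) ∂μinf := by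
  obtain ⟨hPprob, hP0, hPm⟩ := hP
  obtain ⟨hμprob, hμmarg⟩ := hμinf
  haveI := hPprob
  haveI := hμprob
  haveI := hLcount.to_subtype
  set γ' : ℝ≥0∞ := ENNReal.ofReal γ with hγ'
  have hγ'pos : 0 < γ' := ENNReal.ofReal_pos.mpr hγ
  set A : ℕ → Set (ℕ → ℝ) := Aset m Lam w γ' with hA
  have hAm : ∀ n, MeasurableSet (A n) := fun n => measurable_Aset hLcount γ' n
  have hmix : ∀ (n : ℕ) (ω : ℕ → ℝ), (∀ i < n, ω i ∈ Set.Icc (0:ℝ) 1) →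
      ENNReal.ofReal (mixSR m Lam w n ω) = MixE m Lam w n ω := by
    intro n ω hω
    have hnn : ∀ l : Lam, 0 ≤ w l * SR m l n ω := fun l =>
      mul_nonneg (hw l l.2).le (SR_nonneg hm (hLsub l.2) hω)
    have hsumm : Summable fun l : Lam => w l * SR m (l : ℝ) n ω := by
      refine Summable.of_nonneg_of_le hnn (fun l => ?_)
        (hwsum.summable.mul_right ((n : ℝ) * (1 / m) ^ n))
      exact mul_le_mul_of_nonneg_left (SR_le hm (hLsub l.2) hω) (hw l l.2).le
    rw [mixSR, ENNReal.ofReal_tsum_of_nonneg hnn hsumm]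
    exact tsum_congr fun l => ENNReal.ofReal_mul (hw l l.2).le
  have hTA : ∀ (n : ℕ) (ω : ℕ → ℝ), ω ∈ A n → ((n : ℕ∞) + 1) ≤ TBM m Lam w γ ω := by
    intro n ω hω
    rw [hA, mem_Aset] at hω
    refine le_iInf₂ fun k hk => ?_
    obtain ⟨hk1, hkγ⟩ := hk
    by_contra hlt
    push_neg at hlt
    have hkn : k ≤ n := by
      have h2 : (k : ℕ∞) < ((n + 1 : ℕ) : ℕ∞) := by rwa [Nat.cast_add, Nat.cast_one]
      exact Nat.lt_succ_iff.mp (by exact_mod_cast h2)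
    have hgd : ∀ i < k, ω i ∈ Set.Icc (0:ℝ) 1 := fun i hi => hω.2 i (lt_of_lt_of_le hi hkn)
    have h1 : γ' ≤ MixE m Lam w k ω := by
      rw [← hmix k ω hgd]
      exact ENNReal.ofReal_le_ofReal hkγ
    exact absurd h1 (not_le.mpr (hω.1 k hkn))
  have hesc : ∀ (n : ℕ) (ω : ℕ → ℝ), ω ∈ A n → ω n ∈ Set.Icc (0:ℝ) 1 → ω ∉ A (n + 1) →
      γ' ≤ MixE m Lam w (n + 1) ω := by
    intro n ω h1 h2 h3
    rw [hA, mem_Aset] at h1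
    by_contra hcon
    push_neg at hcon
    apply h3
    have hgd : ∀ i < n + 1, ω i ∈ Set.Icc (0:ℝ) 1 := by
      intro i hi
      rcases Nat.lt_succ_iff_lt_or_eq.mp hi with hi' | hi'
      · exact h1.2 i hi'
      · exact hi' ▸ h2
    rw [hA, mem_Aset]
    refine ⟨fun k hk => ?_, hgd⟩
    rcases eq_or_lt_of_le hk with hk' | hk'
    · exact hk' ▸ hcon
    · exact h1.1 k (Nat.lt_succ_iff.mp hk')
  have hA0 : A 0 = Set.univ := by
    ext ω
    simp only [Set.mem_univ, iff_true]
    rw [hA, mem_Aset]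
    refine ⟨fun k hk => ?_, fun i hi => absurd hi (Nat.not_lt_zero i)⟩
    have hk0 : k = 0 := Nat.le_zero.mp hk
    rw [hk0, MixE_zero]
    exact hγ'pos
  set a : ℕ → ℝ≥0∞ := fun n => ∫⁻ ω in A n, MixE m Lam w n ω ∂μinf with ha
  have ha0 : a 0 = 0 := by simp [ha, MixE_zero]
  have hAnull : ∀ n : ℕ, μinf ((fun ω : ℕ → ℝ => ω n) ⁻¹' (Set.Icc (0:ℝ) 1)ᶜ) = 0 :=
    coord_null P μinf hμmarg hP0
  have hsub : ∀ n, A (n + 1) ⊆ A n := Aset_antitone γ'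
  have hclaim : ∀ N : ℕ, γ' * μinf (A N)ᶜ + a N ≤ ∑ n ∈ Finset.range N, μinf (A n) := by
    intro N
    induction N with
    | zero =>
      rw [hA0, Set.compl_univ, measure_empty, mul_zero, ha0]
      simp
    | succ N ih =>
      set E : Set (ℕ → ℝ) :=
        (A N ∩ (fun ω : ℕ → ℝ => ω N) ⁻¹' (Set.Icc (0:ℝ) 1)) \ A (N + 1) with hE
      have hEm : MeasurableSet E :=
        ((hAm N).inter (measurableSet_Icc.preimage (measurable_pi_apply N))).diff (hAm (N + 1))
      have hEsub : E ⊆ A N := fun ω hω => hω.1.1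
      have hdiff_le : μinf (A N \ A (N + 1)) ≤ μinf E := by
        have hsplit : A N \ A (N + 1)
            ⊆ E ∪ (fun ω : ℕ → ℝ => ω N) ⁻¹' (Set.Icc (0:ℝ) 1)ᶜ := by
          intro ω hω
          by_cases hN : ω N ∈ Set.Icc (0:ℝ) 1
          · exact Or.inl ⟨⟨hω.1, hN⟩, hω.2⟩
          · exact Or.inr hN
        calc μinf (A N \ A (N + 1)) ≤ μinf (E ∪ _) := measure_mono hsplit
          _ ≤ μinf E + μinf ((fun ω : ℕ → ℝ => ω N) ⁻¹' (Set.Icc (0:ℝ) 1)ᶜ) :=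
            measure_union_le _ _
          _ = μinf E := by rw [hAnull N, add_zero]
      have hEineq : γ' * μinf E ≤ ∫⁻ ω in E, MixE m Lam w (N + 1) ω ∂μinf := by
        rw [← setLIntegral_const E γ']
        exact setLIntegral_mono' hEm fun ω hω => hesc N ω hω.1.1 hω.1.2 hω.2
      have hdisj : Disjoint E (A (N + 1)) := Set.disjoint_left.mpr fun ω hω => hω.2
      have hsum2 : (∫⁻ ω in E, MixE m Lam w (N + 1) ω ∂μinf) + a (N + 1)
          ≤ a N + μinf (A N) := by
        calc (∫⁻ ω in E, MixE m Lam w (N + 1) ω ∂μinf) + a (N + 1)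
            = ∫⁻ ω in E ∪ A (N + 1), MixE m Lam w (N + 1) ω ∂μinf :=
              (lintegral_union (hAm (N + 1)) hdisj).symm
          _ ≤ ∫⁻ ω in A N, MixE m Lam w (N + 1) ω ∂μinf :=
              lintegral_mono' (Measure.restrict_mono (Set.union_subset hEsub (hsub N)) le_rfl)
                le_rfl
          _ ≤ a N + μinf (A N) :=
              key_step m hm Lam hLsub hLcount w hw hwsum γ' P hP0 hPm μinf hμmarg N
      have hcompl : μinf (A (N + 1))ᶜ = μinf (A N)ᶜ + μinf (A N \ A (N + 1)) := by
        have hset : (A (N + 1))ᶜ = (A N)ᶜ ∪ (A N \ A (N + 1)) := by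
          ext ω
          constructor
          · intro h
            by_cases h2 : ω ∈ A N
            · exact Or.inr ⟨h2, h⟩
            · exact Or.inl h2
          · rintro (h | h)
            · exact fun hc => h (hsub N hc)
            · exact h.2
        rw [hset, measure_union
          (Set.disjoint_left.mpr fun ω (hω : ω ∈ (A N)ᶜ) (h2 : ω ∈ A N \ A (N + 1)) => hω h2.1)
          ((hAm N).diff (hAm (N + 1)))]
      calc γ' * μinf (A (N + 1))ᶜ + a (N + 1)
          = γ' * μinf (A N)ᶜ + (γ' * μinf (A N \ A (N + 1)) + a (N + 1)) := by
            rw [hcompl, mul_add]; ring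
        _ ≤ γ' * μinf (A N)ᶜ + (γ' * μinf E + a (N + 1)) :=
            add_le_add le_rfl (add_le_add (mul_le_mul_right hdiff_le _) le_rfl)
        _ ≤ γ' * μinf (A N)ᶜ + ((∫⁻ ω in E, MixE m Lam w (N + 1) ω ∂μinf) + a (N + 1)) :=
            add_le_add le_rfl (add_le_add hEineq le_rfl)
        _ ≤ γ' * μinf (A N)ᶜ + (a N + μinf (A N)) := add_le_add le_rfl hsum2
        _ = (γ' * μinf (A N)ᶜ + a N) + μinf (A N) := by ring
        _ ≤ (∑ n ∈ Finset.range N, μinf (A n)) + μinf (A N) := add_le_add ih le_rfl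
        _ = ∑ n ∈ Finset.range (N + 1), μinf (A n) := (Finset.sum_range_succ _ _).symm
  have hsum_le : ∀ N : ℕ,
      ∑ n ∈ Finset.range N, μinf (A n) ≤ ∫⁻ ω, (TBM m Lam w γ ω : ℝ≥0∞) ∂μinf := by
    intro N
    have h1 : ∫⁻ ω, ∑ n ∈ Finset.range N, (A n).indicator 1 ω ∂μinf
        = ∑ n ∈ Finset.range N, μinf (A n) := by
      rw [lintegral_finset_sum _ fun n _ => measurable_one.indicator (hAm n)]
      exact Finset.sum_congr rfl fun n _ => lintegral_indicator_one (hAm n)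
    rw [← h1]
    refine lintegral_mono fun ω => ?_
    by_cases hT : TBM m Lam w γ ω = ⊤
    · rw [hT]
      simp
    · lift TBM m Lam w γ ω to ℕ using hT with t ht
      have hcard : ∀ n ∈ (Finset.range N).filter (fun n => ω ∈ A n), n < t := by
        intro n hn
        obtain ⟨-, hAn⟩ := Finset.mem_filter.mp hn
        have h2 := hTA n ω hAn
        rw [← ht] at h2
        have h3 : ((n + 1 : ℕ) : ℕ∞) ≤ (t : ℕ∞) := by rwa [Nat.cast_add, Nat.cast_one]
        exact Nat.lt_of_succ_le (by exact_mod_cast h3)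
      calc ∑ n ∈ Finset.range N, (A n).indicator 1 ω
          = ∑ n ∈ Finset.range N, (if ω ∈ A n then (1:ℝ≥0∞) else 0) :=
            Finset.sum_congr rfl fun n _ => Set.indicator_apply _ _ _
        _ = (((Finset.range N).filter (fun n => ω ∈ A n)).card : ℝ≥0∞) :=
            Finset.sum_boole _ _
        _ ≤ (t : ℝ≥0∞) := by
            have hsubf : (Finset.range N).filter (fun n => ω ∈ A n) ⊆ Finset.range t :=
              fun n hn => Finset.mem_range.mpr (hcard n hn)
            have := Finset.card_le_card hsubf
            rw [Finset.card_range] at this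
            exact_mod_cast Nat.cast_le.mpr this
        _ = ((t : ℕ∞) : ℝ≥0∞) := by simp
  have hbound : ∀ N : ℕ, γ' ≤ (∫⁻ ω, (TBM m Lam w γ ω : ℝ≥0∞) ∂μinf) + γ' * μinf (A N) := by
    intro N
    have h1 : μinf (A N)ᶜ + μinf (A N) = 1 := by
      rw [add_comm, measure_add_measure_compl (hAm N), measure_univ]
    calc γ' = γ' * (μinf (A N)ᶜ + μinf (A N)) := by rw [h1, mul_one]
      _ = γ' * μinf (A N)ᶜ + γ' * μinf (A N) := mul_add _ _ _
      _ ≤ (∑ n ∈ Finset.range N, μinf (A n)) + γ' * μinf (A N) :=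
          add_le_add (le_trans le_self_add (hclaim N)) le_rfl
      _ ≤ (∫⁻ ω, (TBM m Lam w γ ω : ℝ≥0∞) ∂μinf) + γ' * μinf (A N) :=
          add_le_add (hsum_le N) le_rfl
  by_cases hcap : μinf (⋂ n, A n) = 0
  · have hanti : Antitone fun n : ℕ => A n := antitone_nat_of_succ_le hsub
    have htend : Tendsto (fun n : ℕ => μinf (A n)) atTop (𝓝 0) := by
      have h2 := tendsto_measure_iInter_atTop (μ := μinf)
        (fun n => (hAm n).nullMeasurableSet) hanti ⟨0, measure_ne_top _ _⟩
      rw [hcap] at h2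
      exact h2
    have htend2 : Tendsto (fun n : ℕ => (∫⁻ ω, (TBM m Lam w γ ω : ℝ≥0∞) ∂μinf)
        + γ' * μinf (A n)) atTop (𝓝 ((∫⁻ ω, (TBM m Lam w γ ω : ℝ≥0∞) ∂μinf) + γ' * 0)) :=
      Tendsto.add tendsto_const_nhds
        (ENNReal.Tendsto.const_mul htend (Or.inr ENNReal.ofReal_ne_top))
    rw [mul_zero, add_zero] at htend2
    exact ge_of_tendsto' htend2 hbound
  · have hTtop : ∀ ω ∈ ⋂ n, A n, (TBM m Lam w γ ω : ℝ≥0∞) = ⊤ := by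
      intro ω hω
      have hTT : TBM m Lam w γ ω = ⊤ := by
        by_contra hne
        lift TBM m Lam w γ ω to ℕ using hne with t ht
        have h2 := hTA t ω (Set.mem_iInter.mp hω t)
        rw [← ht] at h2
        have h3 : ((t + 1 : ℕ) : ℕ∞) ≤ (t : ℕ∞) := by rwa [Nat.cast_add, Nat.cast_one]
        exact absurd (by exact_mod_cast h3 : t + 1 ≤ t) (Nat.not_succ_le_self t)
      rw [hTT]
      rfl
    have hIm : MeasurableSet (⋂ n, A n) := MeasurableSet.iInter hAm
    calc γ' ≤ ⊤ := le_top
      _ = ⊤ * μinf (⋂ n, A n) := (ENNReal.top_mul hcap).symm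
      _ = ∫⁻ _ω in (⋂ n, A n), (⊤ : ℝ≥0∞) ∂μinf := (setLIntegral_const _ ⊤).symm
      _ ≤ ∫⁻ ω in (⋂ n, A n), (TBM m Lam w γ ω : ℝ≥0∞) ∂μinf :=
          setLIntegral_mono' hIm fun ω hω => le_of_eq (hTtop ω hω).symm
      _ ≤ ∫⁻ ω, (TBM m Lam w γ ω : ℝ≥0∞) ∂μinf :=
          lintegral_mono' Measure.restrict_le_self le_rfl
end
end

section
/- Positivity and finiteness of the KL projection (Lemma 3.2, first claim): Let m ∈ (0,1) and let Q be a probability measure on [0,1] with mean E_Q[X] = q > m. Then 0 < KL_inf(Q;m) < ∞. -/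
open MeasureTheory Filter Set
open scoped ENNReal NNReal Classical

noncomputable section

variable {𝒳 : Type*} [MeasurableSpace 𝒳]

section AuxKL

open Real MeasureTheory

/-- Elementary inequality: `u - 2u² ≤ log (1+u)` for `u ≥ -1/2`. -/
lemma aux_log_one_add_ge {u : ℝ} (hu : -(1/2 : ℝ) ≤ u) : u - 2*u^2 ≤ Real.log (1+u) := by
  have h1 : (0:ℝ) < 1 + u := by linarith
  have h2 : Real.log (1+u)⁻¹ ≤ (1+u)⁻¹ - 1 := Real.log_le_sub_one_of_pos (by positivity)
  rw [Real.log_inv] at h2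
  have h3 : 1 - (1+u)⁻¹ ≤ Real.log (1+u) := by linarith
  have h4 : u - 2*u^2 ≤ 1 - (1+u)⁻¹ := by
    have h5 : 1 - (1+u)⁻¹ = u / (1+u) := by field_simp; ring
    rw [h5, le_div_iff₀ h1]
    nlinarith [mul_nonneg (sq_nonneg u) (by linarith : (0:ℝ) ≤ 1 + 2*u)]
  linarith

/-- Change of measure inequality for lower integrals. -/
lemma aux_lintegral_rnDeriv_mul_le {α : Type*} [MeasurableSpace α] (μ ν : Measure α)
    {g : α → ℝ≥0∞} (hg : Measurable g) :
    ∫⁻ x, ν.rnDeriv μ x * g x ∂μ ≤ ∫⁻ x, g x ∂ν := by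
  have h := lintegral_withDensity_eq_lintegral_mul μ (Measure.measurable_rnDeriv ν μ) hg
  calc ∫⁻ x, ν.rnDeriv μ x * g x ∂μ
      = ∫⁻ x, g x ∂(μ.withDensity (ν.rnDeriv μ)) := by rw [h]; rfl
    _ ≤ ∫⁻ x, g x ∂ν := lintegral_mono' (Measure.withDensity_rnDeriv_le ν μ) le_rfl

/-- Change of measure inequality for Bochner integrals of nonnegative functions. -/
lemma aux_integral_mul_rnDeriv_le {α : Type*} [MeasurableSpace α] (μ ν : Measure α)
    [IsFiniteMeasure ν] {g : α → ℝ} (hg : Measurable g) (hg0 : ∀ x, 0 ≤ g x)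
    (hgν : Integrable g ν) (hgr : Integrable (fun x => g x * (ν.rnDeriv μ x).toReal) μ) :
    ∫ x, g x * (ν.rnDeriv μ x).toReal ∂μ ≤ ∫ x, g x ∂ν := by
  have h0' : 0 ≤ᵐ[μ] fun x => g x * (ν.rnDeriv μ x).toReal :=
    Filter.Eventually.of_forall fun x => mul_nonneg (hg0 x) ENNReal.toReal_nonneg
  have h0'' : 0 ≤ᵐ[ν] g := Filter.Eventually.of_forall hg0
  rw [integral_eq_lintegral_of_nonneg_ae h0' hgr.aestronglyMeasurable,
    integral_eq_lintegral_of_nonneg_ae h0'' hgν.aestronglyMeasurable]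
  have hfin : ∫⁻ x, ENNReal.ofReal (g x) ∂ν ≠ ⊤ := by
    have := hgν.hasFiniteIntegral
    rw [HasFiniteIntegral] at this
    refine ne_of_lt (lt_of_le_of_lt (lintegral_mono fun x => ?_) this)
    rw [Real.enorm_eq_ofReal (hg0 x)]
  refine ENNReal.toReal_mono hfin ?_
  calc ∫⁻ x, ENNReal.ofReal (g x * (ν.rnDeriv μ x).toReal) ∂μ
      ≤ ∫⁻ x, ν.rnDeriv μ x * ENNReal.ofReal (g x) ∂μ := by
        refine lintegral_mono fun x => ?_
        rw [ENNReal.ofReal_mul (hg0 x), mul_comm]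
        exact mul_le_mul_left ENNReal.ofReal_toReal_le _
    _ ≤ ∫⁻ x, ENNReal.ofReal (g x) ∂ν :=
        aux_lintegral_rnDeriv_mul_le μ ν hg.ennreal_ofReal

/-- Algebraic identity used for the constant `c`. -/
lemma aux_c_eq {m q : ℝ} (hm0 : 0 < m) :
    m*(q-m)/4 * (q-m) / (2*m)
      = (m*(q-m)/4)/m * q - (m*(q-m)/4 + 2*((m*(q-m)/4)/m)^2) := by
  field_simp
  ring

end AuxKL

set_option maxHeartbeats 1000000

/-- **Lemma 3.2, first claim (positivity and finiteness of the KL projection).** If `Q` is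
a probability measure on `[0,1]` with mean `q > m`, then `0 < KL_inf(Q;m) < ∞`. -/
theorem KLinf_pos_and_finite
    (m : ℝ) (hm : m ∈ Set.Ioo (0 : ℝ) 1)
    (Q : Measure ℝ) (hQprob : IsProbabilityMeasure Q)
    (hQsupp : Q (Set.Icc (0 : ℝ) 1)ᶜ = 0)
    (q : ℝ) (hq : ∫ x, x ∂Q = q) (hqm : m < q) :
    0 < KLinfBM Q m ∧ KLinfBM Q m < ⊤ := by
  obtain ⟨hm0, hm1⟩ := hm
  have hq0 : (0:ℝ) < q := lt_trans hm0 hqm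
  have hQae : ∀ᵐ x ∂Q, x ∈ Set.Icc (0:ℝ) 1 := by
    rw [ae_iff]; exact hQsupp
  have hQx_int : Integrable (fun x : ℝ => x) Q := by
    refine (integrable_const (1:ℝ)).mono' measurable_id.aestronglyMeasurable ?_
    filter_upwards [hQae] with x hx
    rw [Real.norm_eq_abs, abs_le]; exact ⟨by linarith [hx.1], hx.2⟩
  have hq1 : q ≤ 1 := by
    rw [← hq]
    calc ∫ x, x ∂Q ≤ ∫ _, (1:ℝ) ∂Q :=
          integral_mono_ae hQx_int (integrable_const 1) (hQae.mono fun x hx => hx.2)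
      _ = 1 := by simp
  -- ## Finiteness
  obtain ⟨a, ha_def⟩ : ∃ a : ℝ, a = m / q := ⟨_, rfl⟩
  have ha0 : 0 < a := ha_def ▸ div_pos hm0 hq0
  have ha1 : a < 1 := ha_def ▸ (div_lt_one hq0).mpr hqm
  obtain ⟨A, hA_def⟩ : ∃ A : ℝ≥0∞, A = ENNReal.ofReal a := ⟨_, rfl⟩
  obtain ⟨B, hB_def⟩ : ∃ B : ℝ≥0∞, B = ENNReal.ofReal (1 - a) := ⟨_, rfl⟩
  have hA0 : A ≠ 0 := by
    rw [hA_def, ne_eq, ENNReal.ofReal_eq_zero, not_le]; exact ha0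
  have hAtop : A ≠ ⊤ := hA_def ▸ ENNReal.ofReal_ne_top
  obtain ⟨P₀, hP₀_def⟩ : ∃ P₀ : Measure ℝ, P₀ = A • Q + B • Measure.dirac 0 := ⟨_, rfl⟩
  haveI hP₀prob : IsProbabilityMeasure P₀ := by
    constructor
    rw [hP₀_def]
    simp only [Measure.coe_add, Pi.add_apply, Measure.smul_apply, smul_eq_mul, measure_univ,
      mul_one]
    rw [hA_def, hB_def, ← ENNReal.ofReal_add ha0.le (by linarith)]
    norm_num
  have hdirac_compl : Measure.dirac (0:ℝ) (Set.Icc (0:ℝ) 1)ᶜ = 0 := by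
    rw [Measure.dirac_apply' _ measurableSet_Icc.compl,
      Set.indicator_of_notMem (by simp : (0:ℝ) ∉ (Set.Icc (0:ℝ) 1)ᶜ)]
  have hP₀supp : P₀ (Set.Icc (0:ℝ) 1)ᶜ = 0 := by
    rw [hP₀_def]
    simp [hQsupp, hdirac_compl]
  have hBtop : B ≠ ⊤ := hB_def ▸ ENNReal.ofReal_ne_top
  have hx_dirac_int : Integrable (fun x : ℝ => x) (Measure.dirac (0:ℝ)) := by
    refine ⟨measurable_id.aestronglyMeasurable, ?_⟩
    rw [HasFiniteIntegral, lintegral_dirac]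
    simp
  have hmean₀ : ∫ x, x ∂P₀ = m := by
    rw [hP₀_def, integral_add_measure (hQx_int.smul_measure hAtop)
        (hx_dirac_int.smul_measure hBtop),
      integral_smul_measure, integral_smul_measure, integral_dirac, hq]
    rw [hA_def, ENNReal.toReal_ofReal ha0.le]
    simp only [smul_eq_mul, mul_zero, add_zero]
    rw [ha_def]; field_simp
  have hP₀mem : P₀ ∈ PclassBM m := ⟨hP₀prob, hP₀supp, le_of_eq hmean₀⟩
  have hacQ : Q ≪ P₀ := by
    refine Measure.AbsolutelyContinuous.mk fun s hs h0 => ?_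
    rw [hP₀_def] at h0
    simp only [Measure.coe_add, Pi.add_apply, Measure.smul_apply, smul_eq_mul,
      add_eq_zero, mul_eq_zero] at h0
    rcases h0.1 with h | h
    · exact absurd h hA0
    · exact h
  obtain ⟨K, hK_def⟩ : ∃ K : ℝ≥0∞, K = A⁻¹ := ⟨_, rfl⟩
  have hK0 : K ≠ 0 := hK_def ▸ ENNReal.inv_ne_zero.mpr hAtop
  have hKtop : K ≠ ⊤ := hK_def ▸ ENNReal.inv_ne_top.mpr hA0
  have hKA : K * A = 1 := hK_def ▸ ENNReal.inv_mul_cancel hA0 hAtop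
  have hQleK : Q ≤ K • P₀ := by
    intro s
    calc Q s = K * (A * Q s) := by rw [← mul_assoc, hKA, one_mul]
      _ ≤ K * P₀ s := by
          gcongr
          rw [hP₀_def]
          simp only [Measure.coe_add, Pi.add_apply, Measure.smul_apply, smul_eq_mul]
          exact le_self_add
      _ = (K • P₀) s := by rw [Measure.smul_apply, smul_eq_mul]
  haveI : IsFiniteMeasure (K • P₀) := by
    constructor
    rw [Measure.smul_apply, smul_eq_mul]
    exact ENNReal.mul_lt_top hKtop.lt_top (measure_lt_top _ _)
  have hrnK : ∀ᵐ x ∂Q, Q.rnDeriv P₀ x ≤ K := by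
    have h1 : Q.rnDeriv (K • P₀) ≤ᵐ[K • P₀] 1 := Measure.rnDeriv_le_one_of_le hQleK
    rw [EventuallyLE, Measure.ae_ennreal_smul_measure_iff hK0] at h1
    have h2 : Q.rnDeriv (K • P₀) =ᵐ[P₀] K⁻¹ • Q.rnDeriv P₀ :=
      Measure.rnDeriv_smul_right_of_ne_top Q P₀ hK0 hKtop
    refine hacQ.ae_le ?_
    filter_upwards [h1, h2] with x h1x h2x
    have h3 : K⁻¹ * Q.rnDeriv P₀ x ≤ 1 := by
      rw [← smul_eq_mul, ← Pi.smul_apply, ← h2x]; exact h1x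
    calc Q.rnDeriv P₀ x = K * (K⁻¹ * Q.rnDeriv P₀ x) := by
          rw [← mul_assoc, ENNReal.mul_inv_cancel hK0 hKtop, one_mul]
      _ ≤ K * 1 := mul_le_mul_right h3 K
      _ = K := mul_one K
  have hKr1 : 1 ≤ K.toReal := by
    rw [hK_def, ENNReal.toReal_inv, hA_def, ENNReal.toReal_ofReal ha0.le]
    rw [le_inv_comm₀ one_pos ha0]
    simpa using ha1.le
  have hrnpos := Measure.rnDeriv_pos hacQ
  have hrnlt := hacQ.ae_le (Measure.rnDeriv_lt_top Q P₀)
  have hub : ∀ᵐ x ∂Q, llr Q P₀ x ≤ Real.log K.toReal := by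
    filter_upwards [hrnK, hrnpos, hrnlt] with x h1 h2 h3
    simp only [llr_def]
    exact Real.log_le_log (ENNReal.toReal_pos h2.ne' h3.ne) (ENNReal.toReal_mono hKtop h1)
  have hptwise : ∀ᵐ x ∂P₀,
      Q.rnDeriv P₀ x * ENNReal.ofReal (max 0 (- llr Q P₀ x)) ≤ 1 := by
    filter_upwards [Measure.rnDeriv_lt_top Q P₀] with x hx
    rcases eq_or_ne (Q.rnDeriv P₀ x) 0 with h0 | h0
    · simp [h0]
    · have htpos : 0 < (Q.rnDeriv P₀ x).toReal := ENNReal.toReal_pos h0 hx.ne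
      have hllrx : llr Q P₀ x = Real.log (Q.rnDeriv P₀ x).toReal := by simp [llr_def]
      rw [hllrx]
      calc Q.rnDeriv P₀ x * ENNReal.ofReal (max 0 (- Real.log (Q.rnDeriv P₀ x).toReal))
          = ENNReal.ofReal ((Q.rnDeriv P₀ x).toReal
              * max 0 (- Real.log (Q.rnDeriv P₀ x).toReal)) := by
            rw [ENNReal.ofReal_mul ENNReal.toReal_nonneg, ENNReal.ofReal_toReal hx.ne]
        _ ≤ 1 := by
            rw [← ENNReal.ofReal_one]
            refine ENNReal.ofReal_le_ofReal ?_
            rcases le_or_gt (Q.rnDeriv P₀ x).toReal 1 with h1 | h1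
            · have hlog : Real.log (Q.rnDeriv P₀ x).toReal ≤ 0 := Real.log_nonpos htpos.le h1
              rw [max_eq_right (by linarith)]
              have h2 := (Real.abs_log_mul_self_lt (Q.rnDeriv P₀ x).toReal htpos h1).le
              rw [abs_mul, abs_of_nonpos hlog, abs_of_pos htpos] at h2
              nlinarith
            · rw [max_eq_left (neg_nonpos.mpr (Real.log_nonneg h1.le))]
              simp
  have hgen : ∀ F : ℝ → ℝ≥0∞, Measurable F →
      (∀ᵐ x ∂P₀, Q.rnDeriv P₀ x * F x ≤ 1) → ∫⁻ x, F x ∂Q ≤ 1 := by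
    intro F hF hb
    conv_lhs => rw [← Measure.withDensity_rnDeriv_eq Q P₀ hacQ]
    rw [lintegral_withDensity_eq_lintegral_mul _ (Measure.measurable_rnDeriv Q P₀) hF]
    calc ∫⁻ x, (Q.rnDeriv P₀ * F) x ∂P₀ ≤ ∫⁻ _, 1 ∂P₀ := by
          refine lintegral_mono_ae ?_
          filter_upwards [hb] with x hx
          simpa using hx
      _ = 1 := by simp
  have hneg_le : ∫⁻ x, ENNReal.ofReal (max 0 (- llr Q P₀ x)) ∂Q ≤ 1 :=
    hgen _ ((measurable_const.max (measurable_llr Q P₀).neg).ennreal_ofReal) hptwise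
  have hint₀ : Integrable (llr Q P₀) Q := by
    refine ⟨(measurable_llr Q P₀).aestronglyMeasurable, ?_⟩
    rw [HasFiniteIntegral]
    calc ∫⁻ x, ↑‖llr Q P₀ x‖₊ ∂Q
        ≤ ∫⁻ x, (ENNReal.ofReal (Real.log K.toReal)
            + ENNReal.ofReal (max 0 (- llr Q P₀ x))) ∂Q := by
          refine lintegral_mono_ae ?_
          filter_upwards [hub] with x hx
          rw [← enorm_eq_nnnorm, Real.enorm_eq_ofReal_abs,
            ← ENNReal.ofReal_add (Real.log_nonneg hKr1) (le_max_left _ _)]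
          refine ENNReal.ofReal_le_ofReal ?_
          rcases le_or_gt 0 (llr Q P₀ x) with h | h
          · rw [abs_of_nonneg h]
            linarith [le_max_left (0:ℝ) (-llr Q P₀ x)]
          · rw [abs_of_neg h, max_eq_right (by linarith : (0:ℝ) ≤ -llr Q P₀ x)]
            linarith [Real.log_nonneg hKr1]
      _ = ENNReal.ofReal (Real.log K.toReal) * Q Set.univ
            + ∫⁻ x, ENNReal.ofReal (max 0 (- llr Q P₀ x)) ∂Q := by
          rw [lintegral_add_left measurable_const, lintegral_const]
      _ < ⊤ := by
          rw [measure_univ, mul_one]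
          exact ENNReal.add_lt_top.mpr
            ⟨ENNReal.ofReal_lt_top, lt_of_le_of_lt hneg_le ENNReal.one_lt_top⟩
  have hfin : KLinfBM Q m < ⊤ := by
    have h1 : KLinfBM Q m ≤ KL Q P₀ := by
      rw [KLinfBM, KLinf]; exact iInf₂_le P₀ hP₀mem
    refine lt_of_le_of_lt h1 ?_
    rw [KL, if_pos ⟨hacQ, hint₀⟩]
    exact ENNReal.ofReal_lt_top
  -- ## Positivity
  obtain ⟨l, hl_def⟩ : ∃ l : ℝ, l = m * (q - m) / 4 := ⟨_, rfl⟩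
  have hl0 : 0 < l := by
    rw [hl_def]; exact div_pos (mul_pos hm0 (by linarith)) (by norm_num)
  have hl4 : l ≤ 1/4 := by rw [hl_def]; nlinarith
  obtain ⟨c, hc_def⟩ : ∃ c : ℝ, c = l * (q - m) / (2*m) := ⟨_, rfl⟩
  have hc0 : 0 < c := by
    rw [hc_def]; exact div_pos (mul_pos hl0 (by linarith)) (by linarith)
  obtain ⟨cl, hcl_app⟩ : ∃ cl : ℝ → ℝ, ∀ x, cl x = max 0 (min 1 x) := ⟨_, fun _ => rfl⟩
  have hcl_fun : cl = fun x => max 0 (min 1 x) := funext hcl_app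
  have hcl_meas : Measurable cl := by
    rw [hcl_fun]; exact measurable_const.max (measurable_const.min measurable_id)
  have hcl0 : ∀ x, 0 ≤ cl x := fun x => (hcl_app x) ▸ le_max_left _ _
  have hcl1 : ∀ x, cl x ≤ 1 := fun x => (hcl_app x) ▸ max_le zero_le_one (min_le_left _ _)
  have hcl_eq : ∀ x ∈ Set.Icc (0:ℝ) 1, cl x = x := fun x hx => by
    rw [hcl_app x, min_eq_right hx.2, max_eq_right hx.1]
  have hlm_pos : 0 < l / m := div_pos hl0 hm0
  have hlm_ge : l ≤ l / m := by
    rw [le_div_iff₀ hm0]; nlinarith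
  obtain ⟨L, hL_app⟩ : ∃ L : ℝ → ℝ, ∀ x, L x = (1 - l) + (l/m) * cl x := ⟨_, fun _ => rfl⟩
  have hL_fun : L = fun x => (1 - l) + (l/m) * cl x := funext hL_app
  have hL_meas : Measurable L := by
    rw [hL_fun]; exact measurable_const.add (hcl_meas.const_mul _)
  have hLpos : ∀ x, 0 < L x := fun x => by
    have h1 : 0 ≤ (l/m) * cl x := mul_nonneg hlm_pos.le (hcl0 x)
    rw [hL_app x]; linarith
  have hLub : ∀ x, L x ≤ 1 - l + l/m := fun x => by
    have h1 : (l/m) * cl x ≤ (l/m) * 1 := mul_le_mul_of_nonneg_left (hcl1 x) hlm_pos.le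
    rw [hL_app x]; linarith
  have hlb : ∀ P ∈ PclassBM m, ENNReal.ofReal c ≤ KL Q P := by
    rintro P ⟨hPprob, hPsupp, hPmean⟩
    haveI := hPprob
    by_cases hcond : Q ≪ P ∧ Integrable (llr Q P) Q
    swap
    · rw [KL, if_neg hcond]; exact le_top
    obtain ⟨pac, pint⟩ := hcond
    rw [KL, if_pos ⟨pac, pint⟩]
    refine ENNReal.ofReal_le_ofReal ?_
    have hPae : ∀ᵐ x ∂P, x ∈ Set.Icc (0:ℝ) 1 := by
      rw [ae_iff]; exact hPsupp
    have h1l : (0:ℝ) < 1 - l := by linarith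
    have hup1 : (1:ℝ) ≤ 1 - l + l/m := by linarith
    have hlogL_bd : ∀ x, |Real.log (L x)| ≤
        -Real.log (1-l) + Real.log (1 - l + l/m) := fun x => by
      have hub' : Real.log (L x) ≤ Real.log (1 - l + l/m) :=
        Real.log_le_log (hLpos x) (hLub x)
      have hlb' : Real.log (1-l) ≤ Real.log (L x) := by
        refine Real.log_le_log h1l ?_
        have h1 : 0 ≤ (l/m) * cl x := mul_nonneg hlm_pos.le (hcl0 x)
        rw [hL_app x]; linarith
      have h2 : 0 ≤ Real.log (1 - l + l/m) := Real.log_nonneg hup1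
      have h3 : Real.log (1-l) ≤ 0 := Real.log_nonpos h1l.le (by linarith)
      rw [abs_le]; constructor <;> linarith
    have hlogL_int : Integrable (fun x => Real.log (L x)) Q :=
      (integrable_const (-Real.log (1-l) + Real.log (1 - l + l/m))).mono'
        (hL_meas.log.aestronglyMeasurable)
        (Filter.Eventually.of_forall fun x => by
          rw [Real.norm_eq_abs]; exact hlogL_bd x)
    have hclaim2 : c ≤ ∫ x, Real.log (L x) ∂Q := by
      have hint2 : Integrable (fun x : ℝ => (l/m) * x - (l + 2*(l/m)^2)) Q :=
        (hQx_int.const_mul _).sub (integrable_const _)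
      have hmono : ∀ᵐ x ∂Q, (l/m) * x - (l + 2*(l/m)^2) ≤ Real.log (L x) := by
        filter_upwards [hQae] with x hx
        have hclx : cl x = x := hcl_eq x hx
        have hLxu : L x = 1 + ((l/m) * x - l) := by
          rw [hL_app x, hclx]; ring
        have hxm0 : 0 ≤ (l/m) * x := mul_nonneg hlm_pos.le hx.1
        have hxm1 : (l/m) * x ≤ l/m := by
          calc (l/m) * x ≤ (l/m) * 1 := mul_le_mul_of_nonneg_left hx.2 hlm_pos.le
            _ = l/m := mul_one _
        have hu_lb : -(1/2 : ℝ) ≤ (l/m) * x - l := by linarith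
        have hu_sq : ((l/m) * x - l)^2 ≤ (l/m)^2 :=
          sq_le_sq' (by linarith [hlm_ge]) (by linarith)
        have hkey := aux_log_one_add_ge hu_lb
        rw [hLxu]
        linarith
      have h5 : ∫ x, ((l/m) * x - (l + 2*(l/m)^2)) ∂Q ≤ ∫ x, Real.log (L x) ∂Q :=
        integral_mono_ae hint2 hlogL_int hmono
      have h6 : ∫ x, ((l/m) * x - (l + 2*(l/m)^2)) ∂Q = (l/m)*q - (l + 2*(l/m)^2) := by
        rw [integral_sub (hQx_int.const_mul _) (integrable_const _), integral_const_mul, hq,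
          integral_const, probReal_univ, one_smul]
      have h7 : c = (l/m)*q - (l + 2*(l/m)^2) := by
        rw [hc_def, hl_def]; exact aux_c_eq hm0
      linarith
    have hr_int : Integrable (fun x => (P.rnDeriv Q x).toReal) Q :=
      Measure.integrable_toReal_rnDeriv
    have hLr_int : Integrable (fun x => L x * (P.rnDeriv Q x).toReal) Q :=
      hr_int.bdd_mul hL_meas.aestronglyMeasurable
        (Filter.Eventually.of_forall fun x => by
          rw [Real.norm_eq_abs, abs_of_pos (hLpos x)]; exact hLub x)
    have hexp := exp_neg_llr pac
    have hptw : ∀ᵐ x ∂Q,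
        Real.log (L x) - llr Q P x ≤ L x * (P.rnDeriv Q x).toReal - 1 := by
      filter_upwards [hexp] with x hx
      have h1 : 0 < L x * Real.exp (- llr Q P x) := mul_pos (hLpos x) (Real.exp_pos _)
      have h2 := Real.log_le_sub_one_of_pos h1
      rw [Real.log_mul (hLpos x).ne' (Real.exp_pos _).ne', Real.log_exp] at h2
      rw [← hx]
      linarith
    have h8 : ∫ x, (Real.log (L x) - llr Q P x) ∂Q
        ≤ ∫ x, (L x * (P.rnDeriv Q x).toReal - 1) ∂Q :=
      integral_mono_ae (hlogL_int.sub pint) (hLr_int.sub (integrable_const 1)) hptw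
    rw [integral_sub hlogL_int pint, integral_sub hLr_int (integrable_const 1)] at h8
    have hL_int_P : Integrable L P :=
      (integrable_const (1 - l + l/m)).mono' hL_meas.aestronglyMeasurable
        (Filter.Eventually.of_forall fun x => by
          rw [Real.norm_eq_abs, abs_of_pos (hLpos x)]; exact hLub x)
    have h9 : ∫ x, L x * (P.rnDeriv Q x).toReal ∂Q ≤ ∫ x, L x ∂P :=
      aux_integral_mul_rnDeriv_le Q P hL_meas (fun x => (hLpos x).le) hL_int_P hLr_int
    have h10 : ∫ x, L x ∂P ≤ 1 := by
      have hcl_int_P : Integrable cl P :=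
        (integrable_const (1:ℝ)).mono' hcl_meas.aestronglyMeasurable
          (Filter.Eventually.of_forall fun x => by
            rw [Real.norm_eq_abs, abs_of_nonneg (hcl0 x)]; exact hcl1 x)
      have h11 : ∫ x, cl x ∂P = ∫ x, x ∂P :=
        integral_congr_ae (hPae.mono fun x hx => hcl_eq x hx)
      have h12 : ∫ x, L x ∂P = (1-l) + (l/m) * ∫ x, x ∂P := by
        simp only [hL_app]
        rw [integral_add (integrable_const _) (hcl_int_P.const_mul _), integral_const,
          probReal_univ, integral_const_mul, h11, one_smul]
      rw [h12]
      have h13 : (l/m) * ∫ x, x ∂P ≤ (l/m) * m :=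
        mul_le_mul_of_nonneg_left hPmean hlm_pos.le
      have h14 : (l/m) * m = l := by field_simp
      linarith
    have hconst : ∫ _, (1:ℝ) ∂Q = 1 := by simp
    rw [hconst] at h8
    linarith
  refine ⟨lt_of_lt_of_le (ENNReal.ofReal_pos.mpr hc0) ?_, hfin⟩
  rw [KLinfBM, KLinf]
  exact le_iInf₂ hlb
end
end
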